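/- arXiv:1712.00138 — 5 statements merged into one kernel-verified Lean document; each statement's English description precedes it below -/
import Mathlib

section
/- The only tournament that is a CKI-digraph is the directed 3-cycle C⃗₃, and a tournament is kernel perfect if and only if it is transitive. -/
/-- A kernel of a digraph given by arc relation `A`: an independent and absorbent set. -/
def IsKernel {V : Type} (A : V → V → Prop) (S : Set V) : Prop :=
  (∀ u ∈ S, ∀ v ∈ S, ¬ A u v) ∧ (∀ u, u ∉ S → ∃ v ∈ S, A u v)

def HasKernel {V : Type} (A : V → V → Prop) : Prop := ∃ S, IsKernel A S

/-- The induced subdigraph on a vertex subset `S`. -/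
def Induced {V : Type} (A : V → V → Prop) (S : Set V) : S → S → Prop :=
  fun u v => A u v

/-- Critical kernel imperfect: no kernel, but every proper induced subdigraph has one. -/
def IsCKI {V : Type} (A : V → V → Prop) : Prop :=
  ¬ HasKernel A ∧ ∀ S : Set V, S ≠ Set.univ → HasKernel (Induced A S)

/-- Kernel perfect: every induced subdigraph (including the whole digraph) has a kernel. -/
def IsKP {V : Type} (A : V → V → Prop) : Prop :=
  ∀ S : Set V, HasKernel (Induced A S)

/-- Isomorphism of digraphs. -/
def DigraphIso {V W : Type} (A : V → V → Prop) (B : W → W → Prop) : Prop :=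
  ∃ e : V ≃ W, ∀ u v, A u v ↔ B (e u) (e v)

/-- The circulant digraph on `ZMod m` with connection set `J`. -/
def Circ (m : ℕ) (J : Set (ZMod m)) : ZMod m → ZMod m → Prop :=
  fun i j => j - i ∈ J

/-- The connection set `{1, ±2, ±3, …, ±⌊n/2⌋}`. -/
def Jfull (n : ℕ) : Set (ZMod n) :=
  {j | j = 1 ∨ ∃ k : ℕ, 2 ≤ k ∧ k ≤ n / 2 ∧ (j = (k : ZMod n) ∨ j = -(k : ZMod n))}

/-- The connection set `{2, −3, 4, …, (−1)ⁿ·n}` of `C⃗_{2n+1}(2,−3,…,(−1)ⁿn)`. -/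
def Jalt (n : ℕ) : Set (ZMod (2 * n + 1)) :=
  {j | ∃ k : ℕ, 2 ≤ k ∧ k ≤ n ∧ j = (-1 : ZMod (2 * n + 1)) ^ k * (k : ZMod (2 * n + 1))}

/-- The underlying simple graph of a digraph. -/
def underlying {V : Type} (A : V → V → Prop) : SimpleGraph V where
  Adj u v := u ≠ v ∧ (A u v ∨ A v u)
  symm := ⟨fun _ _ h => ⟨h.1.symm, h.2.symm⟩⟩
  loopless := ⟨fun _ h => h.1 rfl⟩

/-- The clique number of a simple graph. -/
noncomputable def cliqueNum' {W : Type} (G : SimpleGraph W) : ℕ :=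
  sSup {n | ∃ t : Finset W, G.IsNClique n t}

/-- A graph is perfect if each induced subgraph has chromatic number equal to clique number. -/
def IsPerfectGraph {V : Type} (G : SimpleGraph V) : Prop :=
  ∀ S : Set V, (G.induce S).chromaticNumber = (cliqueNum' (G.induce S) : ℕ∞)

def Asymmetric' {V : Type} (A : V → V → Prop) : Prop := ∀ u v, A u v → ¬ A v u

def LocallyInSemicomplete {V : Type} (A : V → V → Prop) : Prop :=
  ∀ v x y, A x v → A y v → x ≠ y → (A x y ∨ A y x)

def LocallyOutSemicomplete {V : Type} (A : V → V → Prop) : Prop :=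
  ∀ v x y, A v x → A v y → x ≠ y → (A x y ∨ A y x)

def QuasiTransitive {V : Type} (A : V → V → Prop) : Prop :=
  ∀ u v w, A u v → A v w → u ≠ w → (A u w ∨ A w u)

def ThreeQuasiTransitive {V : Type} (A : V → V → Prop) : Prop :=
  ∀ u v w x, A u v → A v w → A w x → u ≠ x → (A u x ∨ A x u)

def ArcLocallyInSemicomplete {V : Type} (A : V → V → Prop) : Prop :=
  ∀ u v x y, A u v → A x u → A y v → x ≠ y → (A x y ∨ A y x)

def ArcLocallyOutSemicomplete {V : Type} (A : V → V → Prop) : Prop :=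
  ∀ u v x y, A u v → A u x → A v y → x ≠ y → (A x y ∨ A y x)

/-- 3-anti-quasi-transitive: the endpoints of every anti-directed path on 4 vertices are adjacent. -/
def ThreeAntiQuasiTransitive {V : Type} (A : V → V → Prop) : Prop :=
  ∀ u v w x, u ≠ w → v ≠ x → u ≠ x →
    ((A u v ∧ A w v ∧ A w x) ∨ (A v u ∧ A v w ∧ A x w)) → (A u x ∨ A x u)

def TT3Free {V : Type} (A : V → V → Prop) : Prop :=
  ¬ ∃ u v w, u ≠ v ∧ v ≠ w ∧ u ≠ w ∧ A u v ∧ A v w ∧ A u w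

def IsTournament {V : Type} (A : V → V → Prop) : Prop :=
  (∀ u v, A u v → ¬ A v u) ∧ (∀ u v, u ≠ v → A u v ∨ A v u)

def Converse {V : Type} (A : V → V → Prop) : V → V → Prop := fun u v => A v u

/-- Complete multipartite: non-adjacency is transitive. -/
def CompleteMultipartite {V : Type} (G : SimpleGraph V) : Prop :=
  Transitive (fun u v => ¬ G.Adj u v)

/-- A diagonal of the cycle `c 0, c 1, …, c (N-1), c 0`: an arc of `D` between cycle
vertices which is not an arc of the cycle. -/
def IsDiagonal {V : Type} (A : V → V → Prop) {N : ℕ} [NeZero N] (c : Fin N → V) (i j : Fin N) : Prop :=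
  i ≠ j ∧ j ≠ i + 1 ∧ A (c i) (c j)

private lemma tourn_irrefl {V : Type} {A : V → V → Prop} (hT : IsTournament A) (x : V) :
    ¬ A x x := fun h => hT.1 x x h h

private lemma tourn_induced {V : Type} {A : V → V → Prop} (hT : IsTournament A) (S : Set V) :
    IsTournament (Induced A S) :=
  ⟨fun u v h => hT.1 u.1 v.1 h, fun u v huv => hT.2 u.1 v.1 (fun h => huv (Subtype.ext h))⟩

private lemma sink_exists {V : Type} [Finite V] [Nonempty V] {A : V → V → Prop}
    (hT : IsTournament A) (htr : Transitive A) : ∃ v, ∀ u, u ≠ v → A u v := by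
  classical
  haveI := Fintype.ofFinite V
  have key : ∀ s : Finset V, s.Nonempty → ∃ v ∈ s, ∀ u ∈ s, u ≠ v → A u v := by
    intro s
    induction s using Finset.induction_on with
    | empty => intro h; exact absurd h (by simp)
    | insert a s ha ih =>
      intro _
      rcases s.eq_empty_or_nonempty with rfl | hs
      · refine ⟨a, by simp, ?_⟩
        intro u hu hne
        simp only [Finset.mem_insert, Finset.notMem_empty, or_false] at hu
        exact absurd hu hne
      · obtain ⟨v, hv, hsink⟩ := ih hs
        have hav : a ≠ v := fun h => ha (h ▸ hv)
        rcases hT.2 a v hav with h1 | h2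
        · refine ⟨v, Finset.mem_insert_of_mem hv, ?_⟩
          intro u hu hne
          rcases Finset.mem_insert.1 hu with rfl | hu'
          · exact h1
          · exact hsink u hu' hne
        · refine ⟨a, Finset.mem_insert_self a s, ?_⟩
          intro u hu hne
          rcases Finset.mem_insert.1 hu with rfl | hu'
          · exact absurd rfl hne
          · by_cases huv : u = v
            · exact huv ▸ h2
            · exact htr (hsink u hu' huv) h2
  obtain ⟨v, _, h⟩ := key Finset.univ ⟨Classical.arbitrary V, Finset.mem_univ _⟩
  exact ⟨v, fun u hne => h u (Finset.mem_univ u) hne⟩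

private lemma kernel_of_transitive {V : Type} [Finite V] {A : V → V → Prop}
    (hT : IsTournament A) (htr : Transitive A) : HasKernel A := by
  rcases isEmpty_or_nonempty V with h | h
  · exact ⟨∅, fun u hu => absurd hu (by simp), fun u => (h.false u).elim⟩
  · obtain ⟨v, hv⟩ := sink_exists hT htr
    refine ⟨{v}, ?_, ?_⟩
    · intro u hu w hw
      rw [Set.mem_singleton_iff] at hu hw
      subst hu; subst hw
      exact tourn_irrefl hT w
    · intro u hu
      rw [Set.mem_singleton_iff] at hu
      exact ⟨v, Set.mem_singleton v, hv u hu⟩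

private lemma kernel_of_card_le_two {W : Type} [Fintype W] {A : W → W → Prop}
    (hT : IsTournament A) (h2 : Fintype.card W ≤ 2) : HasKernel A := by
  classical
  apply kernel_of_transitive hT
  intro x y z hxy hyz
  exfalso
  have hxy' : x ≠ y := fun e => tourn_irrefl hT y (e ▸ hxy)
  have hyz' : y ≠ z := fun e => tourn_irrefl hT z (e ▸ hyz)
  have hxz' : x ≠ z := by
    intro e; subst e; exact hT.1 x y hxy hyz
  have hcard : ({x, y, z} : Finset W).card = 3 := by
    rw [Finset.card_insert_of_notMem (by simp [hxy', hxz']),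
      Finset.card_insert_of_notMem (by simp [hyz']), Finset.card_singleton]
  have := Finset.card_le_univ ({x, y, z} : Finset W)
  rw [hcard] at this
  omega

private lemma no_kernel_3cycle {V : Type} {A : V → V → Prop} (hT : IsTournament A)
    {a b c : V} (hab : A a b) (hbc : A b c) (hca : A c a)
    (hcov : ∀ x, x = a ∨ x = b ∨ x = c) : ¬ HasKernel A := by
  rintro ⟨S, ind, abs⟩
  by_cases ha : a ∈ S
  · have hb : b ∉ S := fun hb => ind a ha b hb hab
    have hc : c ∉ S := fun hc => ind c hc a ha hca
    obtain ⟨v, hv, hbv⟩ := abs b hb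
    rcases hcov v with h | h | h
    · exact hT.1 a b hab (h ▸ hbv)
    · exact hb (h ▸ hv)
    · exact hc (h ▸ hv)
  · by_cases hb : b ∈ S
    · have hc : c ∉ S := fun hc => ind b hb c hc hbc
      obtain ⟨v, hv, hcv⟩ := abs c hc
      rcases hcov v with h | h | h
      · exact ha (h ▸ hv)
      · exact hT.1 b c hbc (h ▸ hcv)
      · exact hc (h ▸ hv)
    · by_cases hc : c ∈ S
      · obtain ⟨v, hv, hav⟩ := abs a ha
        rcases hcov v with h | h | h
        · exact ha (h ▸ hv)
        · exact hb (h ▸ hv)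
        · exact hT.1 c a hca (h ▸ hav)
      · obtain ⟨v, hv, _⟩ := abs a ha
        rcases hcov v with h | h | h
        · exact ha (h ▸ hv)
        · exact hb (h ▸ hv)
        · exact hc (h ▸ hv)


/-- the unique CKI-tournament is `C⃗₃`, and a tournament is KP iff transitive. -/
theorem stmt5 {V : Type} [Fintype V] (A : V → V → Prop) (hT : IsTournament A) :
    (IsCKI A ↔ DigraphIso A (Circ 3 ({1} : Set (ZMod 3)))) ∧
    (IsKP A ↔ Transitive A) := by
  classical
  have hKP : IsKP A ↔ Transitive A := by
    constructor
    · intro hkp x y z hxy hyz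
      by_contra hxz
      have hxy' : x ≠ y := fun e => tourn_irrefl hT y (e ▸ hxy)
      have hyz' : y ≠ z := fun e => tourn_irrefl hT z (e ▸ hyz)
      have hxz' : x ≠ z := by intro e; subst e; exact hT.1 x y hxy hyz
      have hzx : A z x := (hT.2 x z hxz').resolve_left hxz
      refine no_kernel_3cycle (tourn_induced hT {x, y, z})
        (a := ⟨x, by simp⟩) (b := ⟨y, by simp⟩) (c := ⟨z, by simp⟩)
        hxy hyz hzx ?_ (hkp {x, y, z})
      rintro ⟨v, hv⟩
      simp only [Set.mem_insert_iff, Set.mem_singleton_iff] at hv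
      rcases hv with rfl | rfl | rfl
      · exact Or.inl rfl
      · exact Or.inr (Or.inl rfl)
      · exact Or.inr (Or.inr rfl)
    · intro htr S
      refine kernel_of_transitive (tourn_induced hT S) ?_
      intro a b c h1 h2
      exact htr h1 h2
  refine ⟨?_, hKP⟩
  constructor
  · rintro ⟨hnk, hsub⟩
    rcases isEmpty_or_nonempty V with hE | hN
    · exact absurd ⟨∅, fun u hu => absurd hu (by simp), fun u => (hE.false u).elim⟩ hnk
    have hntr : ¬ Transitive A := fun htr => hnk (kernel_of_transitive hT htr)
    obtain ⟨x, y, z, hxy, hyz, hnxz⟩ : ∃ x y z, A x y ∧ A y z ∧ ¬ A x z := by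
      by_contra h
      push_neg at h
      refine absurd ?_ hntr
      intro a b c h1 h2
      exact h a b c h1 h2
    have hxy' : x ≠ y := fun e => tourn_irrefl hT y (e ▸ hxy)
    have hyz' : y ≠ z := fun e => tourn_irrefl hT z (e ▸ hyz)
    have hxz' : x ≠ z := by intro e; subst e; exact hT.1 x y hxy hyz
    have hzx : A z x := (hT.2 x z hxz').resolve_left hnxz
    have hcov : ∀ t, t = x ∨ t = y ∨ t = z := by
      intro t
      by_contra h
      push_neg at h
      obtain ⟨h1, h2, h3⟩ := h
      have hne : ({x, y, z} : Set V) ≠ Set.univ := by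
        intro he
        have ht : t ∈ ({x, y, z} : Set V) := he ▸ Set.mem_univ t
        simp only [Set.mem_insert_iff, Set.mem_singleton_iff] at ht
        tauto
      refine no_kernel_3cycle (tourn_induced hT {x, y, z})
        (a := ⟨x, by simp⟩) (b := ⟨y, by simp⟩) (c := ⟨z, by simp⟩)
        hxy hyz hzx ?_ (hsub {x, y, z} hne)
      rintro ⟨v, hv⟩
      simp only [Set.mem_insert_iff, Set.mem_singleton_iff] at hv
      rcases hv with rfl | rfl | rfl
      · exact Or.inl rfl
      · exact Or.inr (Or.inl rfl)
      · exact Or.inr (Or.inr rfl)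
    refine ⟨⟨fun t => if t = x then 0 else if t = y then 1 else 2,
      fun i => if i = 0 then x else if i = 1 then y else z, ?_, ?_⟩, ?_⟩
    · intro t
      rcases hcov t with h | h | h <;> rw [h]
      · simp
      · simp [Ne.symm hxy', show (1 : ZMod 3) ≠ 0 by decide]
      · simp [Ne.symm hxz', Ne.symm hyz',
          show (2 : ZMod 3) ≠ 0 by decide, show (2 : ZMod 3) ≠ 1 by decide]
    · intro i
      have h3 : i = 0 ∨ i = 1 ∨ i = 2 := by revert i; decide
      rcases h3 with h | h | h <;> rw [h]
      · simp
      · simp [Ne.symm hxy', show (1 : ZMod 3) ≠ 0 by decide]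
      · simp [Ne.symm hxz', Ne.symm hyz',
          show (2 : ZMod 3) ≠ 0 by decide, show (2 : ZMod 3) ≠ 1 by decide]
    · have circ_iff : ∀ i j : ZMod 3, Circ 3 ({1} : Set (ZMod 3)) i j ↔ j - i = 1 :=
        fun i j => Iff.rfl
      intro s t
      rcases hcov s with hs | hs | hs <;> rcases hcov t with ht | ht | ht <;>
        rw [hs, ht] <;>
        simp only [Equiv.coe_fn_mk, circ_iff, if_pos rfl, if_neg (Ne.symm hxy'),
          if_neg (Ne.symm hxz'), if_neg (Ne.symm hyz'), if_neg hxy', if_neg hxz',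
          if_neg hyz'] <;>
        [ exact iff_of_false (tourn_irrefl hT x) (by decide);
          exact iff_of_true hxy (by decide);
          exact iff_of_false (hT.1 z x hzx) (by decide);
          exact iff_of_false (hT.1 x y hxy) (by decide);
          exact iff_of_false (tourn_irrefl hT y) (by decide);
          exact iff_of_true hyz (by decide);
          exact iff_of_true hzx (by decide);
          exact iff_of_false (hT.1 y z hyz) (by decide);
          exact iff_of_false (tourn_irrefl hT z) (by decide)]
  · rintro ⟨e, he⟩
    have harc : ∀ i j : ZMod 3, j - i = 1 → A (e.symm i) (e.symm j) := by
      intro i j h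
      rw [he, Equiv.apply_symm_apply, Equiv.apply_symm_apply]
      exact h
    have cov : ∀ t, t = e.symm 0 ∨ t = e.symm 1 ∨ t = e.symm 2 := by
      intro t
      have h3 : ∀ i : ZMod 3, i = 0 ∨ i = 1 ∨ i = 2 := by decide
      rcases h3 (e t) with h | h | h
      · exact Or.inl (by rw [← h, Equiv.symm_apply_apply])
      · exact Or.inr (Or.inl (by rw [← h, Equiv.symm_apply_apply]))
      · exact Or.inr (Or.inr (by rw [← h, Equiv.symm_apply_apply]))
    constructor
    · exact no_kernel_3cycle hT (harc 0 1 (by decide)) (harc 1 2 (by decide))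
        (harc 2 0 (by decide)) cov
    · intro S hS
      haveI : DecidablePred (· ∈ S) := Classical.decPred _
      obtain ⟨w, hw⟩ := (Set.ne_univ_iff_exists_notMem S).1 hS
      have hV : Fintype.card V = 3 := by
        rw [Fintype.card_congr e, ZMod.card]
      have hlt : Fintype.card ↥S < Fintype.card V := Fintype.card_subtype_lt hw
      exact kernel_of_card_le_two (tourn_induced hT S) (by omega)
end

section
/- Every bipartite tournament is kernel perfect: every induced subdigraph of an orientation of a complete bipartite graph has a kernel. -/
/-- bipartite tournaments are kernel perfect. -/
theorem stmt6 {V : Type} [Fintype V] (A : V → V → Prop) (X : Set V)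
    (hasym : ∀ u v, A u v → ¬ A v u)
    (hcross : ∀ u v, A u v → ((u ∈ X ∧ v ∉ X) ∨ (u ∉ X ∧ v ∈ X)))
    (hcomplete : ∀ u ∈ X, ∀ v, v ∉ X → (A u v ∨ A v u)) :
    IsKP A := by
  intro S
  by_cases h : ∀ y : S, (y : V) ∉ X → ∃ x : S, (x : V) ∈ X ∧ A y x
  · refine ⟨{v : S | (v : V) ∈ X}, ?_, ?_⟩
    · intro u hu v hv hA
      rcases hcross _ _ hA with ⟨_, h2⟩ | ⟨h1, _⟩
      · exact h2 hv
      · exact h1 hu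
    · intro u hu
      obtain ⟨x, hxX, hAx⟩ := h u hu
      exact ⟨x, hxX, hAx⟩
  · push_neg at h
    obtain ⟨y, hyX, hy⟩ := h
    refine ⟨{v : S | (v : V) ∉ X}, ?_, ?_⟩
    · intro u hu v hv hA
      rcases hcross _ _ hA with ⟨h1, _⟩ | ⟨_, h2⟩
      · exact hu h1
      · exact hv h2
    · intro u hu
      simp only [Set.mem_setOf_eq, not_not] at hu
      refine ⟨y, hyX, ?_⟩
      rcases hcomplete _ hu _ hyX with hA | hA
      · exact hA
      · exact absurd hA (hy u hu)
end

section
/- The unique asymmetric 3-quasi-transitive CKI-digraph is the directed 3-cycle C⃗₃. -/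
-- auxiliary lemmas

lemma hasKernel_induced_iff {V : Type} (A : V → V → Prop) (S : Set V) :
    HasKernel (Induced A S) ↔
      ∃ K : Set V, K ⊆ S ∧ (∀ u ∈ K, ∀ v ∈ K, ¬ A u v) ∧
        (∀ u ∈ S, u ∉ K → ∃ s ∈ K, A u s) := by
  constructor
  · rintro ⟨T, hTi, hTa⟩
    refine ⟨Subtype.val '' T, ?_, ?_, ?_⟩
    · rintro u ⟨⟨u, hu⟩, _, rfl⟩; exact hu
    · rintro u ⟨x, hx, rfl⟩ v ⟨y, hy, rfl⟩ h
      exact hTi x hx y hy h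
    · intro u hu hunk
      have hxT : (⟨u, hu⟩ : S) ∉ T := fun h => hunk ⟨⟨u, hu⟩, h, rfl⟩
      obtain ⟨v, hv, hav⟩ := hTa ⟨u, hu⟩ hxT
      exact ⟨v.val, ⟨v, hv, rfl⟩, hav⟩
  · rintro ⟨K, hKS, hKi, hKa⟩
    refine ⟨{x : S | x.val ∈ K}, ?_, ?_⟩
    · intro u hu v hv; exact hKi u.val hu v.val hv
    · intro u hu
      obtain ⟨s, hs, has⟩ := hKa u.val u.property hu
      exact ⟨⟨s, hKS hs⟩, hs, has⟩

section Main
variable {V : Type} {A : V → V → Prop}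

lemma exists_out (ha : Asymmetric' A) (hck : IsCKI A) (x : V) : ∃ w, A x w := by
  by_contra hx
  push_neg at hx
  set S : Set V := {u | u ≠ x ∧ ¬ A u x} with hSdef
  have hSne : S ≠ Set.univ := by
    intro h
    have hxS : x ∈ S := h ▸ Set.mem_univ x
    exact hxS.1 rfl
  obtain ⟨K, hKS, hKi, hKa⟩ := (hasKernel_induced_iff A S).1 (hck.2 S hSne)
  refine hck.1 ⟨K ∪ {x}, ⟨?_, ?_⟩⟩
  · intro u hu v hv
    simp only [Set.mem_union, Set.mem_singleton_iff] at hu hv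
    rcases hu with hu | rfl
    · rcases hv with hv | rfl
      · exact hKi u hu v hv
      · exact (hKS hu).2
    · exact hx v
  · intro u hu
    simp only [Set.mem_union, Set.mem_singleton_iff, not_or] at hu
    by_cases hux : A u x
    · exact ⟨x, Set.mem_union_right _ rfl, hux⟩
    · obtain ⟨s, hs, has⟩ := hKa u ⟨hu.2, hux⟩ hu.1
      exact ⟨s, Set.mem_union_left _ hs, has⟩

lemma kernel_data (ha : Asymmetric' A) (h3 : ThreeQuasiTransitive A) (hck : IsCKI A) (x : V) :
    ∃ (K : Set V) (k : V), k ∈ K ∧ A k x ∧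
      (∀ u ∈ K, ∀ v ∈ K, ¬ A u v) ∧
      (∀ u, u ≠ x → u ∉ K → ∃ s ∈ K, A u s) ∧
      (∀ s ∈ K, ¬ A x s) ∧
      (∀ s ∈ K, A s x → s = k) ∧
      (∀ w, A x w → A w k) := by
  have ha' : ∀ z, ¬ A z z := fun z h => ha z z h h
  have hSne : ({x}ᶜ : Set V) ≠ Set.univ := by
    intro h
    have : x ∈ ({x}ᶜ : Set V) := h ▸ Set.mem_univ x
    exact this rfl
  obtain ⟨K, hKS, hKi, hKa0⟩ := (hasKernel_induced_iff A {x}ᶜ).1 (hck.2 _ hSne)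
  have hKa : ∀ u, u ≠ x → u ∉ K → ∃ s ∈ K, A u s := by
    intro u hux huK
    exact hKa0 u (by simpa using hux) huK
  have hnx : ∀ s ∈ K, ¬ A x s := by
    intro s hs hxs
    refine hck.1 ⟨K, ⟨hKi, ?_⟩⟩
    intro u hu
    by_cases hux : u = x
    · exact ⟨s, hs, hux ▸ hxs⟩
    · exact hKa u hux hu
  have hkx : ∃ k ∈ K, A k x := by
    by_contra h
    push_neg at h
    refine hck.1 ⟨K ∪ {x}, ⟨?_, ?_⟩⟩
    · intro u hu v hv
      simp only [Set.mem_union, Set.mem_singleton_iff] at hu hv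
      rcases hu with hu | rfl
      · rcases hv with hv | rfl
        · exact hKi u hu v hv
        · exact h u hu
      · rcases hv with hv | rfl
        · exact hnx v hv
        · exact ha' _
    · intro u hu
      simp only [Set.mem_union, Set.mem_singleton_iff, not_or] at hu
      obtain ⟨s, hs, has⟩ := hKa u hu.2 hu.1
      exact ⟨s, Set.mem_union_left _ hs, has⟩
  obtain ⟨k, hk, hkxA⟩ := hkx
  obtain ⟨w0, hw0⟩ := exists_out ha hck x
  have absorber : ∀ w, A x w → ∃ t ∈ K, A w t := by
    intro w hxw
    have hwK : w ∉ K := fun h => hnx w h hxw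
    have hwx : w ≠ x := fun h => ha' x (h ▸ hxw)
    exact hKa w hwx hwK
  have forced : ∀ k' ∈ K, A k' x → ∀ w, A x w → ∀ t ∈ K, A w t → k' = t := by
    intro k' hk' hk'x w hxw t ht hwt
    by_contra hne
    rcases h3 k' x w t hk'x hxw hwt hne with h1 | h1
    · exact hKi k' hk' t ht h1
    · exact hKi t ht k' hk' h1
  refine ⟨K, k, hk, hkxA, hKi, hKa, hnx, ?_, ?_⟩
  · intro s hs hsx
    obtain ⟨t, ht, hwt⟩ := absorber w0 hw0
    have e1 : s = t := forced s hs hsx w0 hw0 t ht hwt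
    have e2 : k = t := forced k hk hkxA w0 hw0 t ht hwt
    rw [e1, e2]
  · intro w hxw
    obtain ⟨t, ht, hwt⟩ := absorber w hxw
    have : k = t := forced k hk hkxA w hxw t ht hwt
    rwa [this]

lemma L4 (ha : Asymmetric' A) (h3 : ThreeQuasiTransitive A) (hck : IsCKI A) {x y k : V}
    (hxy : x ≠ y) (hnxy : ¬ A x y) (hnyx : ¬ A y x) (hkx : A k x)
    (hprop : ∀ w, A x w → A w k) (hyk : A y k) : False := by
  have hstep : ∀ w, A x w → A w y := by
    intro w hxw
    have hwk := hprop w hxw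
    have hwy : w ≠ y := fun h => hnxy (h ▸ hxw)
    rcases h3 y k x w hyk hkx hxw (Ne.symm hwy) with h | h
    · rcases h3 y w k x h hwk hkx (Ne.symm hxy) with h1 | h1
      · exact absurd h1 hnyx
      · exact absurd h1 hnxy
    · exact h
  obtain ⟨K, k', hk', hk'y, hKi, hKa, hnyK, huniq, hprop'⟩ := kernel_data ha h3 hck y
  by_cases hxK : x ∈ K
  · have hk'x : k' ≠ x := fun h => hnxy (h ▸ hk'y)
    rcases h3 k' y k x hk'y hyk hkx hk'x with h | h
    · exact hKi k' hk' x hxK h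
    · exact hKi x hxK k' hk' h
  · obtain ⟨s, hs, hxs⟩ := hKa x hxy hxK
    have hsy : A s y := hstep s hxs
    have hsk' : s = k' := huniq s hs hsy
    subst hsk'
    exact ha s k (hprop s hxs) (hprop' k hyk)

lemma L5 (ha : Asymmetric' A) (h3 : ThreeQuasiTransitive A) (hck : IsCKI A) {a b c : V}
    (hab : A a b ∨ A b a) (hbc : A b c ∨ A c b) (hac : a ≠ c) : A a c ∨ A c a := by
  by_contra h
  push_neg at h
  obtain ⟨hnac, hnca⟩ := h
  have hκ : ∀ v : V, ∃ k, A k v ∧ ∀ w, A v w → A w k := by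
    intro v
    obtain ⟨K, k, _, h1, _, _, _, _, h7⟩ := kernel_data ha h3 hck v
    exact ⟨k, h1, h7⟩
  rcases hab with hab | hba
  · rcases hbc with hbc | hcb
    · -- Case 1 : a → b → c
      obtain ⟨k, hka, hkp⟩ := hκ a
      have hbk : A b k := hkp b hab
      have hkc : k ≠ c := fun h => hnca (h ▸ hka)
      rcases h3 k a b c hka hab hbc hkc with h | h
      · obtain ⟨q, hqk, hqp⟩ := hκ k
        have haq : A a q := hqp a hka
        rcases h3 a q k c haq hqk h hac with h1 | h1
        · exact hnac h1
        · exact hnca h1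
      · exact L4 ha h3 hck hac hnac hnca hka hkp h
    · -- Case 3 : a → b ← c
      obtain ⟨k, hka, hkp⟩ := hκ a
      have hbk : A b k := hkp b hab
      rcases h3 c b k a hcb hbk hka (Ne.symm hac) with h | h
      · exact hnca h
      · exact hnac h
  · rcases hbc with hbc | hcb
    · -- Case 2 : a ← b → c
      obtain ⟨k, hkb, hkp⟩ := hκ b
      have hak : A a k := hkp a hba
      rcases h3 a k b c hak hkb hbc hac with h | h
      · exact hnac h
      · exact hnca h
    · -- Case 4 : a ← b ← c
      obtain ⟨m, hmc, hmp⟩ := hκ c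
      have hma : m ≠ a := fun h => hnac (h ▸ hmc)
      rcases h3 m c b a hmc hcb hba hma with h | h
      · -- A m a
        obtain ⟨r, hrm, hrp⟩ := hκ m
        have har : A a r := hrp a h
        have hcr : A c r := hrp c hmc
        obtain ⟨k, hka, hkp⟩ := hκ a
        have hrk : A r k := hkp r har
        rcases h3 c r k a hcr hrk hka (Ne.symm hac) with h1 | h1
        · exact hnca h1
        · exact hnac h1
      · -- A a m
        exact L4 ha h3 hck (Ne.symm hac) hnca hnac hmc hmp h

lemma conn (hck : IsCKI A) (x y : V) :
    Relation.ReflTransGen (fun u v => A u v ∨ A v u) x y := by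
  by_contra hxy
  set S : Set V := {u | Relation.ReflTransGen (fun u v => A u v ∨ A v u) x u} with hSdef
  have hxS : x ∈ S := Relation.ReflTransGen.refl
  have hS1 : S ≠ Set.univ := fun h => hxy (h ▸ Set.mem_univ y : y ∈ S)
  have hS2 : Sᶜ ≠ Set.univ := fun h => (h ▸ Set.mem_univ x : x ∈ Sᶜ) hxS
  obtain ⟨K1, h1S, h1i, h1a⟩ := (hasKernel_induced_iff A S).1 (hck.2 S hS1)
  obtain ⟨K2, h2S, h2i, h2a⟩ := (hasKernel_induced_iff A Sᶜ).1 (hck.2 Sᶜ hS2)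
  have hclosed : ∀ u ∈ S, ∀ v, (A u v ∨ A v u) → v ∈ S := fun u hu v h =>
    Relation.ReflTransGen.tail hu h
  apply hck.1
  refine ⟨K1 ∪ K2, ⟨?_, ?_⟩⟩
  · intro u hu v hv h
    rcases hu with hu | hu <;> rcases hv with hv | hv
    · exact h1i u hu v hv h
    · exact h2S hv (hclosed u (h1S hu) v (Or.inl h))
    · exact h2S hu (hclosed v (h1S hv) u (Or.inr h))
    · exact h2i u hu v hv h
  · intro u hu
    simp only [Set.mem_union, not_or] at hu
    by_cases huS : u ∈ S
    · obtain ⟨s, hs, has⟩ := h1a u huS hu.1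
      exact ⟨s, Set.mem_union_left _ hs, has⟩
    · obtain ⟨s, hs, has⟩ := h2a u huS hu.2
      exact ⟨s, Set.mem_union_right _ hs, has⟩

lemma semi (ha : Asymmetric' A) (h3 : ThreeQuasiTransitive A) (hck : IsCKI A) :
    ∀ x y : V, x ≠ y → A x y ∨ A y x := by
  intro x y hxy
  have ha' : ∀ z, ¬ A z z := fun z h => ha z z h h
  have key : ∀ z, Relation.ReflTransGen (fun u v => A u v ∨ A v u) x z →
      x = z ∨ (A x z ∨ A z x) := by
    intro z hz
    induction hz with
    | refl => exact Or.inl rfl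
    | @tail b c hxb hbc ih =>
      rcases ih with rfl | hadj
      · exact Or.inr hbc
      · by_cases hxc : x = c
        · exact Or.inl hxc
        · exact Or.inr (L5 ha h3 hck hadj hbc hxc)
  rcases key y (conn hck x y) with rfl | h2
  · exact absurd rfl hxy
  · exact h2

end Main

section Part2
variable {V : Type} {A : V → V → Prop}

lemma nonempty_of_cki (hck : IsCKI A) : Nonempty V := by
  by_contra h
  rw [not_nonempty_iff] at h
  exact hck.1 ⟨∅, ⟨fun u hu => absurd hu (Set.notMem_empty u), fun u _ => (h.false u).elim⟩⟩

lemma trans_of_big (ha : Asymmetric' A) (hck : IsCKI A)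
    (hsemi : ∀ x y : V, x ≠ y → A x y ∨ A y x)
    [Fintype V] (hbig : 3 < Fintype.card V) : ∀ u v w, A u v → A v w → A u w := by
  intro u v w huv hvw
  haveI := Classical.decEq V
  have ha' : ∀ z, ¬ A z z := fun z h => ha z z h h
  have huw : u ≠ w := by rintro rfl; exact ha u v huv hvw
  by_contra hnuw
  have hwu : A w u := (hsemi u w huw).resolve_left hnuw
  set S : Set V := {u, v, w} with hSdef
  have hSne : S ≠ Set.univ := by
    intro hSu
    have hsub : (Finset.univ : Finset V) ⊆ {u, v, w} := by
      intro z _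
      have hz : z ∈ S := hSu ▸ Set.mem_univ z
      simpa [hSdef] using hz
    have hle := Finset.card_le_card hsub
    have c1 := Finset.card_insert_le u ({v, w} : Finset V)
    have c2 := Finset.card_insert_le v ({w} : Finset V)
    have c3 : ({w} : Finset V).card = 1 := Finset.card_singleton w
    rw [Finset.card_univ] at hle
    omega
  obtain ⟨K, hKS, hKi, hKa⟩ := (hasKernel_induced_iff A S).1 (hck.2 S hSne)
  have hmem : ∀ s ∈ K, s = u ∨ s = v ∨ s = w := by
    intro s hs
    have := hKS hs
    simpa [hSdef] using this
  have huS : u ∈ S := by simp [hSdef]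
  have hvS : v ∈ S := by simp [hSdef]
  have hwS : w ∈ S := by simp [hSdef]
  by_cases huK : u ∈ K
  · have hvK : v ∉ K := fun hvK => hKi u huK v hvK huv
    obtain ⟨s, hs, hvs⟩ := hKa v hvS hvK
    rcases hmem s hs with rfl | rfl | rfl
    · exact ha _ _ huv hvs
    · exact ha' _ hvs
    · exact hKi s hs u huK hwu
  · obtain ⟨s, hs, hus⟩ := hKa u huS huK
    rcases hmem s hs with rfl | rfl | rfl
    · exact ha' s hus
    · -- s = v ∈ K
      have hwK : w ∉ K := fun hwK => hKi s hs w hwK hvw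
      obtain ⟨t, ht, hwt⟩ := hKa w hwS hwK
      rcases hmem t ht with rfl | rfl | rfl
      · exact huK ht
      · exact ha _ _ hvw hwt
      · exact ha' _ hwt
    · exact hnuw hus

lemma exists_sink (ha : Asymmetric' A) [Fintype V] [Nonempty V]
    (htr : ∀ u v w, A u v → A v w → A u w) : ∃ m : V, ∀ z, ¬ A m z := by
  by_contra h
  push_neg at h
  choose f hf using h
  let g : ℕ → V := fun n => f^[n] (Classical.arbitrary V)
  have hstep : ∀ n, A (g n) (g (n + 1)) := by
    intro n
    have : g (n + 1) = f (g n) := Function.iterate_succ_apply' f n _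
    rw [this]
    exact hf (g n)
  have hchain : ∀ j i, i < j → A (g i) (g j) := by
    intro j
    induction j with
    | zero => intro i hi; omega
    | succ j ih =>
      intro i hi
      rcases Nat.lt_succ_iff_lt_or_eq.1 hi with h' | rfl
      · exact htr _ _ _ (ih i h') (hstep j)
      · exact hstep i
  have hinj : Function.Injective g := by
    intro i j hij
    by_contra hne
    rcases Nat.lt_or_ge i j with h' | h'
    · exact ha _ _ (hchain j i h') (hij ▸ hchain j i h')
    · have h'' : j < i := by omega
      exact ha _ _ (hchain i j h'') (hij ▸ hchain i j h'')
  obtain ⟨i, j, hne, heq⟩ := Finite.exists_ne_map_eq_of_infinite g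
  exact hne (hinj heq)

end Part2

lemma cki_of_iso {V W : Type} {A : V → V → Prop} {B : W → W → Prop}
    (e : V ≃ W) (he : ∀ u v, A u v ↔ B (e u) (e v)) (hB : IsCKI B) : IsCKI A := by
  constructor
  · rintro ⟨S, hSi, hSa⟩
    apply hB.1
    refine ⟨e '' S, ⟨?_, ?_⟩⟩
    · rintro u ⟨a, haS, rfl⟩ v ⟨b, hbS, rfl⟩ h
      exact hSi a haS b hbS ((he a b).2 h)
    · intro w hw
      have hs : e.symm w ∉ S := fun h => hw ⟨e.symm w, h, e.apply_symm_apply w⟩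
      obtain ⟨s, hsS, has⟩ := hSa (e.symm w) hs
      refine ⟨e s, ⟨s, hsS, rfl⟩, ?_⟩
      have h2 := (he (e.symm w) s).1 has
      rwa [e.apply_symm_apply] at h2
  · intro S hS
    have hS' : e '' S ≠ Set.univ := by
      intro h
      apply hS
      ext z
      simp only [Set.mem_univ, iff_true]
      have hz : e z ∈ e '' S := h ▸ Set.mem_univ _
      obtain ⟨b, hbS, hbe⟩ := hz
      exact e.injective hbe ▸ hbS
    obtain ⟨K, hKS, hKi, hKa⟩ := (hasKernel_induced_iff B (e '' S)).1 (hB.2 (e '' S) hS')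
    rw [hasKernel_induced_iff]
    refine ⟨e ⁻¹' K, ?_, ?_, ?_⟩
    · intro u hu
      obtain ⟨b, hbS, hbe⟩ := hKS hu
      exact e.injective hbe ▸ hbS
    · intro u hu v hv h
      exact hKi (e u) hu (e v) hv ((he u v).1 h)
    · intro u huS hu
      obtain ⟨s, hsK, hbs⟩ := hKa (e u) ⟨u, huS, rfl⟩ hu
      obtain ⟨b, hbS, rfl⟩ := hKS hsK
      exact ⟨b, hsK, (he u b).2 hbs⟩

lemma cki_C3 : IsCKI (Circ 3 ({1} : Set (ZMod 3))) := by
  constructor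
  · rintro ⟨K, hKi, hKa⟩
    have key : ∀ u : ZMod 3, (u + 1) ∈ K ↔ u ∉ K := by
      intro u
      constructor
      · intro h hu
        exact hKi u hu (u + 1) h (Set.mem_singleton_iff.2 (by ring))
      · intro hu
        obtain ⟨v, hv, hav⟩ := hKa u hu
        have hv' : v - u = 1 := Set.mem_singleton_iff.1 hav
        have : v = u + 1 := by
          have := sub_eq_iff_eq_add.1 hv'
          rw [this, add_comm]
        rwa [← this]
    have h0 := key 0; have h1 := key 1; have h2 := key 2
    rw [show (0 : ZMod 3) + 1 = 1 by decide] at h0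
    rw [show (1 : ZMod 3) + 1 = 2 by decide] at h1
    rw [show (2 : ZMod 3) + 1 = 0 by decide] at h2
    tauto
  · intro S hS
    have hex : ∃ a, a ∉ S := by
      by_contra h
      push_neg at h
      exact hS (Set.eq_univ_iff_forall.2 h)
    obtain ⟨a, haS⟩ := hex
    rw [hasKernel_induced_iff]
    have tri : ∀ u b : ZMod 3, u ≠ b → u ≠ b + 2 → u = b + 1 := by decide
    by_cases h2 : a + 2 ∈ S
    · refine ⟨{a + 2}, by simpa using h2, ?_, ?_⟩
      · intro u hu v hv harc
        rw [Set.mem_singleton_iff] at hu hv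
        rw [hu, hv] at harc
        have h0 : (0 : ZMod 3) = 1 := by
          have h1 : (a + 2) - (a + 2) = 1 := Set.mem_singleton_iff.1 harc
          simpa using h1
        exact absurd h0 (by decide)
      · intro u huS hunk
        have hu : u ≠ a := fun h => haS (h ▸ huS)
        have hu2 : u ≠ a + 2 := by simpa using hunk
        have hu1 : u = a + 1 := tri u a hu hu2
        subst hu1
        exact ⟨a + 2, rfl, Set.mem_singleton_iff.2 (by ring)⟩
    · refine ⟨S, le_refl S, ?_, ?_⟩
      · intro u hu v hv harc
        have hu1 : u = a + 1 := tri u a (fun h => haS (h ▸ hu)) (fun h => h2 (h ▸ hu))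
        have hv1 : v = a + 1 := tri v a (fun h => haS (h ▸ hv)) (fun h => h2 (h ▸ hv))
        rw [hu1, hv1] at harc
        have h0 : (0 : ZMod 3) = 1 := by
          have h1 : (a + 1) - (a + 1) = 1 := Set.mem_singleton_iff.1 harc
          simpa using h1
        exact absurd h0 (by decide)
      · intro u hu hnu
        exact absurd hu hnu

/-- the unique asymmetric 3-quasi-transitive CKI-digraph is `C⃗₃`. -/
theorem stmt17 {V : Type} [Fintype V] (A : V → V → Prop)
    (ha : Asymmetric' A) (h3 : ThreeQuasiTransitive A) :
    IsCKI A ↔ DigraphIso A (Circ 3 ({1} : Set (ZMod 3))) := by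
  constructor
  · intro hck
    haveI := Classical.decEq V
    have ha' : ∀ z, ¬ A z z := fun z h => ha z z h h
    have hsemi := semi ha h3 hck
    haveI hne : Nonempty V := nonempty_of_cki hck
    have hcard : Fintype.card V ≤ 3 := by
      by_contra hbig
      push_neg at hbig
      have htr := trans_of_big ha hck hsemi hbig
      obtain ⟨m, hm⟩ := exists_sink ha htr
      apply hck.1
      refine ⟨{m}, ⟨?_, ?_⟩⟩
      · intro u hu v hv
        rw [Set.mem_singleton_iff] at hu hv
        rw [hu, hv]
        exact ha' m
      · intro u hu
        rw [Set.mem_singleton_iff] at hu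
        exact ⟨m, rfl, (hsemi u m hu).resolve_right (hm u)⟩
    obtain ⟨v0⟩ := hne
    obtain ⟨v1, h01⟩ := exists_out ha hck v0
    obtain ⟨v2, h12⟩ := exists_out ha hck v1
    have d01 : v0 ≠ v1 := fun h => ha' v0 (h ▸ h01)
    have d12 : v1 ≠ v2 := fun h => ha' v1 (h ▸ h12)
    have d02 : v0 ≠ v2 := fun h => ha v0 v1 h01 (by rw [← h] at h12; exact h12)
    have huniv : ∀ z : V, z = v0 ∨ z = v1 ∨ z = v2 := by
      intro z
      by_contra hz
      push_neg at hz
      obtain ⟨hz0, hz1, hz2⟩ := hz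
      have hc4 : ({z, v0, v1, v2} : Finset V).card = 4 := by
        rw [Finset.card_insert_of_notMem (by simp [hz0, hz1, hz2]),
            Finset.card_insert_of_notMem (by simp [d01, d02]),
            Finset.card_insert_of_notMem (by simp [d12]), Finset.card_singleton]
      have hle := Finset.card_le_card (Finset.subset_univ ({z, v0, v1, v2} : Finset V))
      rw [hc4, Finset.card_univ] at hle
      omega
    have h20 : A v2 v0 := by
      by_contra h20n
      have h02 : A v0 v2 := (hsemi v0 v2 d02).resolve_right h20n
      apply hck.1
      refine ⟨{v2}, ⟨?_, ?_⟩⟩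
      · intro u hu v hv
        rw [Set.mem_singleton_iff] at hu hv
        rw [hu, hv]
        exact ha' v2
      · intro u hu
        rw [Set.mem_singleton_iff] at hu
        rcases huniv u with rfl | rfl | rfl
        · exact ⟨v2, rfl, h02⟩
        · exact ⟨v2, rfl, h12⟩
        · exact absurd rfl hu
    -- remaining non-arcs
    have n10 : ¬ A v1 v0 := ha v0 v1 h01
    have n21 : ¬ A v2 v1 := ha v1 v2 h12
    have n02 : ¬ A v0 v2 := ha v2 v0 h20
    -- build the equivalence
    have z10 : (1 : ZMod 3) ≠ 0 := by decide
    have z20 : (2 : ZMod 3) ≠ 0 := by decide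
    have z21 : (2 : ZMod 3) ≠ 1 := by decide
    let f : V → ZMod 3 := fun u => if u = v0 then 0 else if u = v1 then 1 else 2
    let g : ZMod 3 → V := fun i => if i = 0 then v0 else if i = 1 then v1 else v2
    have hf0 : f v0 = 0 := by simp [f]
    have hf1 : f v1 = 1 := by simp [f, Ne.symm d01]
    have hf2 : f v2 = 2 := by simp [f, Ne.symm d02, Ne.symm d12]
    have hcirc : ∀ i j : ZMod 3, Circ 3 {1} i j ↔ j - i = 1 := fun i j => Iff.rfl
    refine ⟨⟨f, g, ?_, ?_⟩, ?_⟩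
    · intro u
      rcases huniv u with h | h | h
      · rw [h, hf0]; simp [g]
      · rw [h, hf1]; simp [g, z10]
      · rw [h, hf2]; simp [g, z20, z21]
    · intro i
      rcases (by decide : ∀ i : ZMod 3, i = 0 ∨ i = 1 ∨ i = 2) i with rfl | rfl | rfl
      · show f (g 0) = 0
        simp only [g, if_pos rfl]
        exact hf0
      · show f (g 1) = 1
        simp only [g, if_neg z10, if_pos rfl]
        exact hf1
      · show f (g 2) = 2
        simp only [g, if_neg z20, if_neg z21]
        exact hf2
    · intro u v
      simp only [Equiv.coe_fn_mk]
      rw [hcirc]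
      rcases huniv u with hu | hu | hu <;> rcases huniv v with hv | hv | hv
      · rw [hu, hv, hf0]; exact iff_of_false (ha' v0) (by decide)
      · rw [hu, hv, hf0, hf1]; exact iff_of_true h01 (by decide)
      · rw [hu, hv, hf0, hf2]; exact iff_of_false n02 (by decide)
      · rw [hu, hv, hf1, hf0]; exact iff_of_false n10 (by decide)
      · rw [hu, hv, hf1]; exact iff_of_false (ha' v1) (by decide)
      · rw [hu, hv, hf1, hf2]; exact iff_of_true h12 (by decide)
      · rw [hu, hv, hf2, hf0]; exact iff_of_true h20 (by decide)
      · rw [hu, hv, hf2, hf1]; exact iff_of_false n21 (by decide)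
      · rw [hu, hv, hf2]; exact iff_of_false (ha' v2) (by decide)
  · rintro ⟨e, he⟩
    exact cki_of_iso e he cki_C3
end

section
/- The directed odd cycles are exactly the asymmetric CKI-digraphs among arc-locally in-semicomplete digraphs, among arc-locally out-semicomplete digraphs, and among 3-anti-quasi-transitive TT₃-free digraphs. -/
namespace S18

variable {V : Type}

def PathOn (A : V → V → Prop) (n : ℕ) (f : ℕ → V) : Prop :=
  ∀ i, i < n → A (f i) (f (i + 1))

lemma flip_parity {χ : ℕ → Prop} (h : ∀ i, χ (i + 1) ↔ ¬ χ i) :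
    ∀ k, χ (2 * k) ↔ χ 0 := by
  intro k
  induction k with
  | zero => exact Iff.rfl
  | succ n ih =>
      have h1 := h (2 * n)
      have h2 := h (2 * n + 1)
      have e : 2 * (n + 1) = 2 * n + 1 + 1 := by ring
      rw [e, h2, h1, not_not]
      exact ih

lemma no_kernel_of_cyclic {W : Type} (B : W → W → Prop) (m : ℕ) (hm : Odd m)
    (g : ℕ → W) (hcl : g m = g 0)
    (harc : ∀ i, B (g i) (g (i + 1)))
    (honly : ∀ i v, B (g i) v → v = g (i + 1)) :
    ¬ HasKernel B := by
  rintro ⟨S, hind, habs⟩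
  have flip : ∀ i, (g (i + 1) ∈ S) ↔ ¬ (g i ∈ S) := by
    intro i
    constructor
    · intro h1 h0
      exact hind _ h0 _ h1 (harc i)
    · intro h0
      obtain ⟨v, hv, hBv⟩ := habs _ h0
      rwa [honly i v hBv] at hv
  rcases hm with ⟨k, hk⟩
  have h1 : (g m ∈ S) ↔ ¬ (g 0 ∈ S) := by
    subst hk
    rw [flip (2 * k)]
    exact not_congr (flip_parity (χ := fun i => g i ∈ S) flip k)
  rw [hcl] at h1
  tauto

lemma closed_univ {A : V → V → Prop} (hc : IsCKI A) (X : Set V) (hne : X.Nonempty)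
    (hcl : ∀ x ∈ X, ∀ y, A x y → y ∈ X) : X = Set.univ := by
  by_contra hX
  obtain ⟨K1, hK1⟩ := hc.2 X hX
  set K1' : Set V := {v | ∃ h : v ∈ X, (⟨v, h⟩ : X) ∈ K1} with hK1'def
  set Y : Set V := {v | v ∉ X ∧ ∀ k ∈ K1', ¬ A v k} with hYdef
  have hYne : Y ≠ Set.univ := by
    obtain ⟨x, hx⟩ := hne
    intro h
    have hxY : x ∈ Y := h ▸ Set.mem_univ x
    exact hxY.1 hx
  obtain ⟨K2, hK2⟩ := hc.2 Y hYne
  set K2' : Set V := {v | ∃ h : v ∈ Y, (⟨v, h⟩ : Y) ∈ K2} with hK2'def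
  apply hc.1
  refine ⟨K1' ∪ K2', ?_, ?_⟩
  · rintro u (hu | hu) v (hv | hv) hA
    · obtain ⟨hux, hu1⟩ := hu
      obtain ⟨hvx, hv1⟩ := hv
      exact hK1.1 _ hu1 _ hv1 hA
    · obtain ⟨hux, hu1⟩ := hu
      obtain ⟨hvy, hv1⟩ := hv
      exact hvy.1 (hcl u hux v hA)
    · obtain ⟨huy, hu1⟩ := hu
      exact huy.2 v hv hA
    · obtain ⟨huy, hu1⟩ := hu
      obtain ⟨hvy, hv1⟩ := hv
      exact hK2.1 _ hu1 _ hv1 hA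
  · intro u hu
    have hu1 : u ∉ K1' := fun h => hu (Or.inl h)
    have hu2 : u ∉ K2' := fun h => hu (Or.inr h)
    by_cases hX' : u ∈ X
    · have : (⟨u, hX'⟩ : X) ∉ K1 := fun h => hu1 ⟨hX', h⟩
      obtain ⟨q, hq, harc⟩ := hK1.2 _ this
      exact ⟨q.1, Or.inl ⟨q.2, hq⟩, harc⟩
    · by_cases hAb : ∃ k ∈ K1', A u k
      · obtain ⟨k, hk, hak⟩ := hAb
        exact ⟨k, Or.inl hk, hak⟩
      · push_neg at hAb
        have huY : u ∈ Y := ⟨hX', hAb⟩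
        have : (⟨u, huY⟩ : Y) ∉ K2 := fun h => hu2 ⟨huY, h⟩
        obtain ⟨q, hq, harc⟩ := hK2.2 _ this
        exact ⟨q.1, Or.inr ⟨q.2, hq⟩, harc⟩

lemma reach {A : V → V → Prop} (hc : IsCKI A) (u v : V) :
    ∃ n f, f 0 = u ∧ f n = v ∧ PathOn A n f := by
  set X : Set V := {w | ∃ n f, f 0 = u ∧ f n = w ∧ PathOn A n f} with hX
  have hu : u ∈ X := ⟨0, fun _ => u, rfl, rfl, fun i hi => absurd hi (Nat.not_lt_zero i)⟩
  have hcl : ∀ x ∈ X, ∀ y, A x y → y ∈ X := by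
    rintro x ⟨n, f, h0, hn, hp⟩ y hA
    refine ⟨n + 1, fun i => if i ≤ n then f i else y, ?_, ?_, ?_⟩
    · simp [h0]
    · simp
    · intro i hi
      by_cases h1 : i < n
      · have e1 : i ≤ n := by omega
        have e2 : i + 1 ≤ n := by omega
        simp only [if_pos e1, if_pos e2]
        exact hp i h1
      · have e0 : i = n := by omega
        subst e0
        have e2 : ¬ (i + 1 ≤ i) := by omega
        simp only [le_refl, if_pos, if_neg e2]
        rwa [hn]
  have hXu := closed_univ hc X ⟨u, hu⟩ hcl
  rw [Set.eq_univ_iff_forall] at hXu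
  exact hXu v

lemma nonemptyV {A : V → V → Prop} (hc : IsCKI A) : Nonempty V := by
  by_contra h
  refine hc.1 ⟨∅, ?_, ?_⟩
  · intro u _
    exact absurd (Nonempty.intro u) h
  · intro u _
    exact absurd (Nonempty.intro u) h

lemma exists_out {A : V → V → Prop} (hc : IsCKI A) (ha : Asymmetric' A) (u : V) :
    ∃ w, A u w := by
  by_contra h
  push_neg at h
  have hcl : ∀ x ∈ ({u} : Set V), ∀ y, A x y → y ∈ ({u} : Set V) := by
    intro x hx y hA
    rw [Set.mem_singleton_iff] at hx
    subst hx
    exact absurd hA (h y)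
  have hX : ({u} : Set V) = Set.univ := closed_univ hc {u} ⟨u, rfl⟩ hcl
  apply hc.1
  refine ⟨{u}, ?_, ?_⟩
  · intro a ha' b hb' hA
    rw [Set.mem_singleton_iff] at ha' hb'
    subst ha'
    exact h _ hA
  · intro w hw
    exact absurd (hX ▸ Set.mem_univ w : w ∈ ({u} : Set V)) hw

lemma concat {A : V → V → Prop} {n p : ℕ} {f g' : ℕ → V}
    (hf : PathOn A n f) (hg : PathOn A p g') (h : f n = g' 0) :
    ∃ h', h' 0 = f 0 ∧ h' (n + p) = g' p ∧ PathOn A (n + p) h' := by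
  refine ⟨fun i => if i < n then f i else g' (i - n), ?_, ?_, ?_⟩
  · by_cases h0 : 0 < n
    · simp [h0]
    · have hn0 : n = 0 := by omega
      subst hn0
      simp [← h]
  · have hnp : ¬ (n + p < n) := by omega
    simp [hnp]
  · intro i hi
    by_cases h1 : i < n
    · by_cases h2 : i + 1 < n
      · simp only [if_pos h1, if_pos h2]
        exact hf i h1
      · have e : i + 1 = n := by omega
        simp only [if_pos h1, if_neg h2]
        have e2 : i + 1 - n = 0 := by omega
        rw [e2, ← h, ← e]
        exact hf i h1
    · have h2 : ¬ (i + 1 < n) := by omega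
      simp only [if_neg h1, if_neg h2]
      have e : i + 1 - n = (i - n) + 1 := by omega
      rw [e]
      exact hg _ (by omega)

end S18

namespace S18

variable {V : Type}

lemma single_arc {A : V → V → Prop} {u v : V} (hA : A u v) :
    PathOn A 1 (fun i => if i = 0 then u else v) := by
  intro i hi
  have h0 : i = 0 := by omega
  subst h0
  simp [hA]

lemma oddclosed {A : V → V → Prop} (hc : IsCKI A) (ha : Asymmetric' A) :
    ∃ n f, Odd n ∧ PathOn A n f ∧ f n = f 0 := by
  by_contra hno
  push_neg at hno
  obtain ⟨u₀⟩ := nonemptyV hc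
  set OR : V → Prop := fun v => ∃ n f, Odd n ∧ f 0 = u₀ ∧ f n = v ∧ PathOn A n f with hOR
  set ER : V → Prop := fun v => ∃ n f, Even n ∧ f 0 = u₀ ∧ f n = v ∧ PathOn A n f with hER
  have huniq : ∀ v, OR v → ER v → False := by
    rintro v ⟨n, f, hn, hf0, hfn, hfp⟩ ⟨m, f2, hm, hf20, hf2n, hf2p⟩
    obtain ⟨q, b, hb0, hbq, hbp⟩ := reach hc v u₀
    rcases Nat.even_or_odd q with hq | hq
    · obtain ⟨h', h0, hnp, hp⟩ := concat hfp hbp (hfn.trans hb0.symm)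
      exact hno (n + q) h' (hn.add_even hq) hp (by rw [hnp, h0, hbq, hf0])
    · obtain ⟨h', h0, hnp, hp⟩ := concat hf2p hbp (hf2n.trans hb0.symm)
      exact hno (m + q) h' (hm.add_odd hq) hp (by rw [hnp, h0, hbq, hf20])
  have hall : ∀ v, OR v ∨ ER v := by
    intro v
    obtain ⟨n, f, h0, hn, hp⟩ := reach hc u₀ v
    rcases Nat.even_or_odd n with h | h
    · exact Or.inr ⟨n, f, h, h0, hn, hp⟩
    · exact Or.inl ⟨n, f, h, h0, hn, hp⟩
  have hext : ∀ u v, A u v → ER u → OR v := by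
    rintro u v hA ⟨n, f, he, h0, hn, hp⟩
    obtain ⟨h', hh0, hhn, hhp⟩ := concat hp (single_arc hA) (by simp [hn])
    refine ⟨n + 1, h', he.add_one, hh0.trans h0, ?_, hhp⟩
    simpa using hhn
  have hext2 : ∀ u v, A u v → OR u → ER v := by
    rintro u v hA ⟨n, f, he, h0, hn, hp⟩
    obtain ⟨h', hh0, hhn, hhp⟩ := concat hp (single_arc hA) (by simp [hn])
    refine ⟨n + 1, h', he.add_one, hh0.trans h0, ?_, hhp⟩
    simpa using hhn
  apply hc.1
  refine ⟨{v | ¬ OR v}, ?_, ?_⟩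
  · intro u hu v hv hA
    have hEu : ER u := (hall u).resolve_left hu
    exact hv (hext u v hA hEu)
  · intro u hu
    have hOu : OR u := not_not.mp hu
    obtain ⟨w, hw⟩ := exists_out hc ha u
    refine ⟨w, ?_, hw⟩
    intro hOw
    exact huniq w hOw (hext2 u w hw hOu)

structure MinCyc (A : V → V → Prop) where
  M : ℕ
  g : ℕ → V
  hodd : Odd M
  hM3 : 3 ≤ M
  harc : ∀ i, A (g i) (g (i + 1))
  hper : ∀ i, g (i + M) = g i
  hinj : ∀ i j, g i = g j → i % M = j % M
  hmin : ∀ s, Odd s → s < M → ∀ f, PathOn A s f → f s ≠ f 0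

lemma exists_minCyc {A : V → V → Prop} (hc : IsCKI A) (ha : Asymmetric' A) :
    Nonempty (MinCyc A) := by
  classical
  have hex : ∃ n, Odd n ∧ ∃ f, PathOn A n f ∧ f n = f 0 := by
    obtain ⟨n, f, h1, h2, h3⟩ := oddclosed hc ha
    exact ⟨n, h1, f, h2, h3⟩
  set M := Nat.find hex with hM
  obtain ⟨hModd, f₀, hpath, hclosed⟩ := Nat.find_spec hex
  have hmin' : ∀ s, s < M → ¬ (Odd s ∧ ∃ f, PathOn A s f ∧ f s = f 0) :=
    fun s hs => Nat.find_min hex hs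
  have hM0 : 0 < M := hModd.pos
  set g : ℕ → V := fun i => f₀ (i % M) with hg
  have hper : ∀ i, g (i + M) = g i := fun i => by simp [hg, Nat.add_mod_right]
  have harc : ∀ i, A (g i) (g (i + 1)) := by
    intro i
    have hr : i % M < M := Nat.mod_lt _ hM0
    have h1 : (i + 1) % M = (i % M + 1) % M :=
      ((Nat.mod_modEq i M).symm.add_right 1 : _)
    by_cases hcase : i % M + 1 = M
    · have h2 : (i + 1) % M = 0 := by rw [h1, hcase, Nat.mod_self]
      have h3 := hpath _ hr
      rw [hcase, hclosed] at h3
      show A (f₀ (i % M)) (f₀ ((i + 1) % M))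
      rw [h2]
      exact h3
    · have h2 : (i + 1) % M = i % M + 1 := by
        rw [h1]
        exact Nat.mod_eq_of_lt (by omega)
      show A (f₀ (i % M)) (f₀ ((i + 1) % M))
      rw [h2]
      exact hpath _ hr
  have hinj : ∀ i j, g i = g j → i % M = j % M := by
    have key : ∀ r t, r < t → t < M → f₀ r = f₀ t → False := by
      intro r t hrt htM heq
      rcases Nat.even_or_odd (t - r) with hev | hod
      · have hodd2 : Odd (M - (t - r)) := by
          rw [Nat.odd_iff]
          have e1 := Nat.odd_iff.mp hModd
          have e2 := Nat.even_iff.mp hev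
          omega
        apply hmin' (M - (t - r)) (by omega)
        refine ⟨hodd2, fun k => g (t + k), fun k _ => harc (t + k), ?_⟩
        show g (t + (M - (t - r))) = g (t + 0)
        have e1 : t + (M - (t - r)) = r + M := by omega
        rw [e1, hper]
        have e2 : g r = f₀ r := by
          show f₀ (r % M) = f₀ r
          rw [Nat.mod_eq_of_lt (by omega)]
        have e3 : g t = f₀ t := by
          show f₀ (t % M) = f₀ t
          rw [Nat.mod_eq_of_lt htM]
        rw [e2, heq]
        exact (e3.symm : f₀ t = g (t + 0))
      · apply hmin' (t - r) (by omega)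
        refine ⟨hod, fun k => g (r + k), fun k _ => harc (r + k), ?_⟩
        show g (r + (t - r)) = g (r + 0)
        have e1 : r + (t - r) = t := by omega
        rw [e1]
        have e2 : g r = f₀ r := by
          show f₀ (r % M) = f₀ r
          rw [Nat.mod_eq_of_lt (by omega)]
        have e3 : g t = f₀ t := by
          show f₀ (t % M) = f₀ t
          rw [Nat.mod_eq_of_lt htM]
        rw [e3, ← heq]
        exact (e2.symm : f₀ r = g (r + 0))
    intro i j heq
    by_contra hne
    have heq' : f₀ (i % M) = f₀ (j % M) := heq
    rcases Nat.lt_trichotomy (i % M) (j % M) with h | h | h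
    · exact key _ _ h (Nat.mod_lt _ hM0) heq'
    · exact hne h
    · exact key _ _ h (Nat.mod_lt _ hM0) heq'.symm
  have hM1 : M ≠ 1 := by
    intro h1
    have harc0 := harc 0
    have e : g 1 = g 0 := by
      show f₀ (1 % M) = f₀ (0 % M)
      rw [h1]
    rw [e] at harc0
    exact ha _ _ harc0 harc0
  have hM3 : 3 ≤ M := by
    have := Nat.odd_iff.mp hModd
    omega
  exact ⟨⟨M, g, hModd, hM3, harc, hper, hinj,
    fun s hs hsM f hf hcf => hmin' s hsM ⟨hs, f, hf, hcf⟩⟩⟩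

end S18

namespace S18

variable {V : Type} {A : V → V → Prop}

lemma MinCyc.hM0 (c : MinCyc A) : 0 < c.M := by
  have := c.hM3; omega

lemma MinCyc.gmod (c : MinCyc A) (i : ℕ) : c.g i = c.g (i % c.M) := by
  have h : ∀ q r, c.g (r + c.M * q) = c.g r := by
    intro q
    induction q with
    | zero => intro r; simp
    | succ n ih =>
        intro r
        have e : r + c.M * (n + 1) = (r + c.M * n) + c.M := by ring
        rw [e, c.hper, ih]
  conv_lhs => rw [← Nat.mod_add_div i c.M]
  exact h (i / c.M) (i % c.M)

lemma MinCyc.gcong (c : MinCyc A) {i j : ℕ} (h : i % c.M = j % c.M) : c.g i = c.g j := by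
  rw [c.gmod i, h, ← c.gmod j]

lemma MinCyc.gne (c : MinCyc A) {i j : ℕ} (h : i % c.M ≠ j % c.M) : c.g i ≠ c.g j :=
  fun he => h (c.hinj i j he)

lemma mod_add_ne {M b d : ℕ} (h0 : 0 < d) (hd : d < M) : b % M ≠ (b + d) % M := by
  intro h
  have hdvd : M ∣ d := by
    have h2 : M ∣ (b + d) - b := (Nat.modEq_iff_dvd' (Nat.le_add_right b d)).mp h
    simpa using h2
  have := Nat.le_of_dvd h0 hdvd
  omega

lemma MinCyc.noOdd (c : MinCyc A) {s : ℕ} (h3 : 3 ≤ s) (hsM : s ≤ c.M - 2) (hodd : Odd s)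
    (a : ℕ) : ¬ A (c.g a) (c.g (a + s)) := by
  intro hA
  have hM3 := c.hM3
  have hModd := Nat.odd_iff.mp c.hodd
  have hs2 := Nat.odd_iff.mp hodd
  refine c.hmin (c.M - s + 1) ?_ ?_ (fun k => if k = 0 then c.g a else c.g (a + s + k - 1)) ?_ ?_
  · rw [Nat.odd_iff]; omega
  · omega
  · intro i hi
    by_cases h0 : i = 0
    · subst h0
      have e2 : (0:ℕ) + 1 ≠ 0 := by omega
      simp only [if_pos rfl, if_neg e2]
      have e3 : a + s + (0 + 1) - 1 = a + s := by omega
      rw [e3]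
      exact hA
    · have e2 : i + 1 ≠ 0 := by omega
      simp only [if_neg h0, if_neg e2]
      have e3 : a + s + (i + 1) - 1 = (a + s + i - 1) + 1 := by omega
      rw [e3]
      exact c.harc _
  · have e0 : c.M - s + 1 ≠ 0 := by omega
    simp only [if_neg e0, if_pos rfl]
    have e : a + s + (c.M - s + 1) - 1 = a + c.M := by omega
    rw [e, c.hper]
    simp

lemma MinCyc.noRev (c : MinCyc A) (ha : Asymmetric' A) (a : ℕ) :
    ¬ A (c.g (a + 1)) (c.g a) := fun h => ha _ _ (c.harc a) h

lemma cover {M : ℕ} (hM : 0 < M) (P : ℕ → Prop)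
    (Pcong : ∀ x y, x % M = y % M → P x → P y)
    (b₀ : ℕ) (hb : P b₀) (step : ∀ b, P b → P (b + 1)) : ∀ t, P t := by
  have hall : ∀ k, P (b₀ + k) := by
    intro k
    induction k with
    | zero => simpa using hb
    | succ n ih => exact step _ ih
  intro t
  have hle : b₀ ≤ t + M * b₀ := by
    have : b₀ ≤ M * b₀ := Nat.le_mul_of_pos_left b₀ hM
    omega
  have h1 : P (b₀ + (t + M * b₀ - b₀)) := hall _
  have h2 : b₀ + (t + M * b₀ - b₀) = t + M * b₀ := by omega
  rw [h2] at h1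
  exact Pcong _ _ (by rw [Nat.add_mul_mod_self_left]) h1

end S18

namespace S18

variable {V : Type} {A : V → V → Prop}

lemma MinCyc.base2 (c : MinCyc A) (hall : ∀ b, A (c.g b) (c.g (b + 2))) (hM5 : 5 ≤ c.M) :
    False := by
  have hModd := Nat.odd_iff.mp c.hodd
  have hodd2 : Odd (c.M - 2) := by rw [Nat.odd_iff]; omega
  have hlt : c.M - 2 < c.M := by omega
  refine c.hmin (c.M - 2) hodd2 hlt
      (fun k => if k = 0 then c.g 0 else if k = 1 then c.g 2 else c.g (k + 2)) ?_ ?_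
  · intro i hi
    by_cases e0 : i = 0
    · subst e0
      show A (c.g 0) (c.g 2)
      exact hall 0
    · by_cases e1 : i = 1
      · subst e1
        show A (c.g 2) (c.g 4)
        exact hall 2
      · simp only [if_neg e0, if_neg e1, if_neg (by omega : ¬ (i + 1 = 0)),
          if_neg (by omega : ¬ (i + 1 = 1))]
        exact c.harc (i + 2)
  · simp only [if_neg (by omega : ¬ (c.M - 2 = 0)), if_neg (by omega : ¬ (c.M - 2 = 1)),
      if_pos rfl]
    have e : c.M - 2 + 2 = 0 + c.M := by omega
    rw [e, c.hper]
    simp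

lemma elimF1 (c : MinCyc A) (ha : Asymmetric' A) (hf : ArcLocallyInSemicomplete A) :
    ∀ s, Even s → 2 ≤ s → s ≤ c.M - 2 → ∀ a, ¬ A (c.g a) (c.g (a + s)) := by
  have hM3 := c.hM3
  have hModd := Nat.odd_iff.mp c.hodd
  intro s
  induction s using Nat.strong_induction_on with
  | _ s IH =>
  intro hev h2 hsM a hA
  have hev' := Nat.even_iff.mp hev
  have hs3 : s ≤ c.M - 3 := by omega
  have hM5 : 5 ≤ c.M := by omega
  have hPcong : ∀ x y, x % c.M = y % c.M →
      A (c.g x) (c.g (x + s)) → A (c.g y) (c.g (y + s)) := by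
    intro x y hxy h
    have e1 : c.g x = c.g y := c.gcong hxy
    have e2 : c.g (x + s) = c.g (y + s) := c.gcong (by rw [Nat.add_mod, hxy, ← Nat.add_mod])
    rwa [e1, e2] at h
  have step' : ∀ b, A (c.g b) (c.g (b + s)) →
      A (c.g (b + (c.M - 1))) (c.g (b + (c.M - 1) + s)) := by
    intro b hb
    have hx : A (c.g (b + (c.M - 1))) (c.g b) := by
      have h0 := c.harc (b + (c.M - 1))
      have e : b + (c.M - 1) + 1 = b + c.M := by omega
      rw [e, c.hper] at h0
      exact h0
    have hy : A (c.g (b + s + (c.M - 1))) (c.g (b + s)) := by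
      have h0 := c.harc (b + s + (c.M - 1))
      have e : b + s + (c.M - 1) + 1 = b + s + c.M := by omega
      rw [e, c.hper] at h0
      exact h0
    have hne : c.g (b + (c.M - 1)) ≠ c.g (b + s + (c.M - 1)) := by
      have e : b + s + (c.M - 1) = (b + (c.M - 1)) + s := by omega
      rw [e]
      exact c.gne (mod_add_ne (by omega) (by omega))
    rcases hf _ _ _ _ hb hx hy hne with h | h
    · have e : b + s + (c.M - 1) = b + (c.M - 1) + s := by omega
      rwa [e] at h
    · exfalso
      have e : c.g (b + (c.M - 1)) = c.g ((b + s + (c.M - 1)) + (c.M - s)) := by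
        apply c.gcong
        have e2 : b + s + (c.M - 1) + (c.M - s) = (b + (c.M - 1)) + c.M := by omega
        rw [e2, Nat.add_mod_right]
      rw [e] at h
      exact c.noOdd (by omega) (by omega) (by rw [Nat.odd_iff]; omega) _ h
  have hall : ∀ b, A (c.g b) (c.g (b + s)) := by
    refine cover c.hM0 _ hPcong a hA ?_
    intro b hb
    have iter : ∀ k, A (c.g (b + k * (c.M - 1))) (c.g (b + k * (c.M - 1) + s)) := by
      intro k
      induction k with
      | zero => simpa using hb
      | succ n ih =>
          have h0 := step' _ ih
          have e : b + n * (c.M - 1) + (c.M - 1) = b + (n + 1) * (c.M - 1) := by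
            rw [Nat.succ_mul, ← Nat.add_assoc]
          rwa [e] at h0
    have h1 := iter (c.M - 1)
    have hsq : (c.M - 1) * (c.M - 1) = c.M * (c.M - 2) + 1 := by
      have e1 : (c.M - 1) * (c.M - 1) = c.M * (c.M - 1) - (c.M - 1) := by
        rw [Nat.sub_mul, Nat.one_mul]
      have e2 : c.M * (c.M - 1) = c.M * (c.M - 2) + c.M := by
        have e : c.M - 1 = (c.M - 2) + 1 := by omega
        rw [e, Nat.mul_add, Nat.mul_one]
      rw [e1, e2]
      set X := c.M * (c.M - 2) with hX
      omega
    refine hPcong _ _ ?_ h1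
    rw [hsq]
    have e : b + (c.M * (c.M - 2) + 1) = (b + 1) + c.M * (c.M - 2) := by omega
    rw [e, Nat.add_mul_mod_self_left]
  rcases eq_or_lt_of_le h2 with h2' | h4
  · rw [← h2'] at hall
    exact c.base2 hall hM5
  · have h4' : 4 ≤ s := by omega
    have hx : A (c.g (a + c.M - 1)) (c.g a) := by
      have h0 := c.harc (a + c.M - 1)
      have e : a + c.M - 1 + 1 = a + c.M := by omega
      rw [e, c.hper] at h0
      exact h0
    have hy : A (c.g (a + c.M + 1 - s)) (c.g (a + 1)) := by
      have h0 := hall (a + c.M + 1 - s)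
      have e : a + c.M + 1 - s + s = (a + 1) + c.M := by omega
      rw [e, c.hper] at h0
      exact h0
    have hne : c.g (a + c.M - 1) ≠ c.g (a + c.M + 1 - s) := by
      have e : a + c.M - 1 = (a + c.M + 1 - s) + (s - 2) := by omega
      rw [e]
      exact c.gne (Ne.symm (mod_add_ne (by omega) (by omega)))
    rcases hf _ _ _ _ (c.harc a) hx hy hne with h | h
    · have e : c.g (a + c.M + 1 - s) = c.g ((a + c.M - 1) + (c.M + 2 - s)) := by
        apply c.gcong
        have e2 : a + c.M - 1 + (c.M + 2 - s) = (a + c.M + 1 - s) + c.M := by omega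
        rw [e2, Nat.add_mod_right]
      rw [e] at h
      exact c.noOdd (by omega) (by omega) (by rw [Nat.odd_iff]; omega) _ h
    · have e : a + c.M - 1 = (a + c.M + 1 - s) + (s - 2) := by omega
      rw [e] at h
      exact IH (s - 2) (by omega) (by rw [Nat.even_iff]; omega) (by omega) (by omega) _ h

lemma elimF2 (c : MinCyc A) (ha : Asymmetric' A) (hf : ArcLocallyOutSemicomplete A) :
    ∀ s, Even s → 2 ≤ s → s ≤ c.M - 2 → ∀ a, ¬ A (c.g a) (c.g (a + s)) := by
  have hM3 := c.hM3
  have hModd := Nat.odd_iff.mp c.hodd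
  intro s
  induction s using Nat.strong_induction_on with
  | _ s IH =>
  intro hev h2 hsM a hA
  have hev' := Nat.even_iff.mp hev
  have hs3 : s ≤ c.M - 3 := by omega
  have hM5 : 5 ≤ c.M := by omega
  have hPcong : ∀ x y, x % c.M = y % c.M →
      A (c.g x) (c.g (x + s)) → A (c.g y) (c.g (y + s)) := by
    intro x y hxy h
    have e1 : c.g x = c.g y := c.gcong hxy
    have e2 : c.g (x + s) = c.g (y + s) := c.gcong (by rw [Nat.add_mod, hxy, ← Nat.add_mod])
    rwa [e1, e2] at h
  have step' : ∀ b, A (c.g b) (c.g (b + s)) → A (c.g (b + 1)) (c.g (b + 1 + s)) := by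
    intro b hb
    have hne : c.g (b + 1) ≠ c.g (b + s + 1) := by
      have e : b + s + 1 = (b + 1) + s := by omega
      rw [e]
      exact c.gne (mod_add_ne (by omega) (by omega))
    rcases hf _ _ _ _ hb (c.harc b) (c.harc (b + s)) hne with h | h
    · have e : b + s + 1 = b + 1 + s := by omega
      rwa [e] at h
    · exfalso
      have e : c.g (b + 1) = c.g ((b + s + 1) + (c.M - s)) := by
        apply c.gcong
        have e2 : b + s + 1 + (c.M - s) = (b + 1) + c.M := by omega
        rw [e2, Nat.add_mod_right]
      rw [e] at h
      exact c.noOdd (by omega) (by omega) (by rw [Nat.odd_iff]; omega) _ h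
  have hall : ∀ b, A (c.g b) (c.g (b + s)) := cover c.hM0 _ hPcong a hA step'
  rcases eq_or_lt_of_le h2 with h2' | h4
  · rw [← h2'] at hall
    exact c.base2 hall hM5
  · have h4' : 4 ≤ s := by omega
    have hne : c.g (a + s) ≠ c.g (a + 2) := by
      have e : a + s = (a + 2) + (s - 2) := by omega
      rw [e]
      exact c.gne (Ne.symm (mod_add_ne (by omega) (by omega)))
    rcases hf _ _ _ _ (c.harc a) hA (c.harc (a + 1)) hne with h | h
    · have e : c.g (a + 2) = c.g ((a + s) + (c.M + 2 - s)) := by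
        apply c.gcong
        have e2 : a + s + (c.M + 2 - s) = (a + 2) + c.M := by omega
        rw [e2, Nat.add_mod_right]
      rw [e] at h
      exact c.noOdd (by omega) (by omega) (by rw [Nat.odd_iff]; omega) _ h
    · have e : a + s = (a + 2) + (s - 2) := by omega
      rw [e] at h
      exact IH (s - 2) (by omega) (by rw [Nat.even_iff]; omega) (by omega) (by omega) _ h

lemma elimF3 (c : MinCyc A) (ha : Asymmetric' A) (hf : ThreeAntiQuasiTransitive A)
    (hT : TT3Free A) :
    ∀ s, Even s → 2 ≤ s → s ≤ c.M - 2 → ∀ a, ¬ A (c.g a) (c.g (a + s)) := by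
  have hM3 := c.hM3
  have hModd := Nat.odd_iff.mp c.hodd
  intro s
  induction s using Nat.strong_induction_on with
  | _ s IH =>
  intro hev h2 hsM a hA
  have hev' := Nat.even_iff.mp hev
  have hs3 : s ≤ c.M - 3 := by omega
  have hM5 : 5 ≤ c.M := by omega
  rcases eq_or_lt_of_le h2 with h2' | h4
  · apply hT
    rw [← h2'] at hA
    refine ⟨c.g a, c.g (a + 1), c.g (a + 2), ?_, ?_, ?_, c.harc a, c.harc (a + 1), hA⟩
    · exact c.gne (mod_add_ne (by omega) (by omega))
    · have e : a + 2 = (a + 1) + 1 := by omega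
      rw [e]
      exact c.gne (mod_add_ne (by omega) (by omega))
    · exact c.gne (mod_add_ne (by omega) (by omega))
  · have h4' : 4 ≤ s := by omega
    have h1 : c.g (a + 1) ≠ c.g (a + s) := by
      have e : a + s = (a + 1) + (s - 1) := by omega
      rw [e]
      exact c.gne (mod_add_ne (by omega) (by omega))
    have h2v : c.g a ≠ c.g (a + s - 1) := by
      have e : a + s - 1 = a + (s - 1) := by omega
      rw [e]
      exact c.gne (mod_add_ne (by omega) (by omega))
    have h3u : c.g (a + 1) ≠ c.g (a + s - 1) := by
      have e : a + s - 1 = (a + 1) + (s - 2) := by omega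
      rw [e]
      exact c.gne (mod_add_ne (by omega) (by omega))
    have harc2 : A (c.g (a + s - 1)) (c.g (a + s)) := by
      have h0 := c.harc (a + s - 1)
      have e : a + s - 1 + 1 = a + s := by omega
      rwa [e] at h0
    rcases hf (c.g (a + 1)) (c.g a) (c.g (a + s)) (c.g (a + s - 1)) h1 h2v h3u
        (Or.inr ⟨c.harc a, hA, harc2⟩) with h | h
    · have e : a + s - 1 = (a + 1) + (s - 2) := by omega
      rw [e] at h
      exact IH (s - 2) (by omega) (by rw [Nat.even_iff]; omega) (by omega) (by omega) _ h
    · have e : c.g (a + 1) = c.g ((a + s - 1) + (c.M + 2 - s)) := by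
        apply c.gcong
        have e2 : a + s - 1 + (c.M + 2 - s) = (a + 1) + c.M := by omega
        rw [e2, Nat.add_mod_right]
      rw [e] at h
      exact c.noOdd (by omega) (by omega) (by rw [Nat.odd_iff]; omega) _ h

end S18

namespace S18

variable {V : Type} {A : V → V → Prop}

lemma MinCyc.arc_iff (c : MinCyc A) (ha : Asymmetric' A)
    (helim : ∀ s, Even s → 2 ≤ s → s ≤ c.M - 2 → ∀ a, ¬ A (c.g a) (c.g (a + s)))
    (a b : ℕ) : A (c.g a) (c.g b) ↔ b % c.M = (a + 1) % c.M := by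
  have hM3 := c.hM3
  have hModd := Nat.odd_iff.mp c.hodd
  constructor
  · intro hA
    obtain ⟨t, htdef⟩ : ∃ t, t = (b + (c.M - a % c.M)) % c.M := ⟨_, rfl⟩
    have htM : t < c.M := htdef ▸ Nat.mod_lt _ c.hM0
    have hamod : a % c.M < c.M := Nat.mod_lt _ c.hM0
    have hale : a % c.M ≤ a := Nat.mod_le a c.M
    obtain ⟨q, hqe⟩ : ∃ q, a = c.M * q + a % c.M := ⟨a / c.M, by
      have := Nat.div_add_mod a c.M
      omega⟩
    have hcong : (a + t) % c.M = b % c.M := by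
      rw [htdef]
      have e3 : (a + (b + (c.M - a % c.M)) % c.M) % c.M
          = (a + (b + (c.M - a % c.M))) % c.M :=
        ((Nat.mod_modEq _ _).add_left a : _)
      rw [e3]
      have e1 : a + (b + (c.M - a % c.M)) = b + c.M * q + c.M := by omega
      have e4 : b + c.M * q + c.M = b + c.M * (q + 1) := by ring
      rw [e1, e4, Nat.add_mul_mod_self_left]
    have hgb : c.g b = c.g (a + t) := c.gcong hcong.symm
    rw [hgb] at hA
    rcases Nat.lt_or_ge t 2 with h2 | h2
    · interval_cases t
      · exact absurd hA (fun h => ha _ _ h h)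
      · exact hcong.symm
    · exfalso
      rcases Nat.lt_or_ge t (c.M - 1) with hlt | hge
      · rcases Nat.even_or_odd t with hev | hod
        · exact helim t hev h2 (by omega) a hA
        · exact c.noOdd (by have := Nat.odd_iff.mp hod; omega) (by omega) hod a hA
      · have ht1 : t = c.M - 1 := by omega
        subst ht1
        have e : c.g a = c.g ((a + (c.M - 1)) + 1) := by
          have e2 : a + (c.M - 1) + 1 = a + c.M := by omega
          rw [e2, c.hper]
        rw [e] at hA
        exact c.noRev ha _ hA
  · intro h
    have hgb : c.g b = c.g (a + 1) := c.gcong h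
    rw [hgb]
    exact c.harc a

lemma MinCyc.surj (c : MinCyc A) (hc : IsCKI A) (ha : Asymmetric' A)
    (helim : ∀ s, Even s → 2 ≤ s → s ≤ c.M - 2 → ∀ a, ¬ A (c.g a) (c.g (a + s))) :
    ∀ v, ∃ i, c.g i = v := by
  by_contra h
  push_neg at h
  obtain ⟨v, hv⟩ := h
  have hS : Set.range c.g ≠ Set.univ := by
    intro he
    obtain ⟨i, hi⟩ := Set.eq_univ_iff_forall.mp he v
    exact hv i hi
  have hk := hc.2 _ hS
  refine no_kernel_of_cyclic (Induced A (Set.range c.g)) c.M c.hodd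
      (fun i => ⟨c.g i, Set.mem_range_self i⟩) ?_ ?_ ?_ hk
  · apply Subtype.ext
    show c.g c.M = c.g 0
    have := c.hper 0
    simpa using this
  · intro i
    exact c.harc i
  · intro i w hB
    obtain ⟨w, hw⟩ := w
    obtain ⟨j, rfl⟩ := hw
    have hB' : A (c.g i) (c.g j) := hB
    have hmod := (c.arc_iff ha helim i j).mp hB'
    exact Subtype.ext (c.gcong hmod)

lemma MinCyc.iso (c : MinCyc A) (ha : Asymmetric' A)
    (helim : ∀ s, Even s → 2 ≤ s → s ≤ c.M - 2 → ∀ a, ¬ A (c.g a) (c.g (a + s)))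
    (hsurj : ∀ v, ∃ i, c.g i = v) :
    DigraphIso A (Circ c.M ({1} : Set (ZMod c.M))) := by
  haveI : NeZero c.M := ⟨by have := c.hM3; omega⟩
  have hbij : Function.Bijective (fun z : ZMod c.M => c.g z.val) := by
    constructor
    · intro z w hzw
      have h := c.hinj _ _ hzw
      rw [Nat.mod_eq_of_lt (ZMod.val_lt z), Nat.mod_eq_of_lt (ZMod.val_lt w)] at h
      have h1 : ((z.val : ℕ) : ZMod c.M) = ((w.val : ℕ) : ZMod c.M) := by rw [h]
      rwa [ZMod.natCast_rightInverse z, ZMod.natCast_rightInverse w] at h1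
    · intro v
      obtain ⟨i, hi⟩ := hsurj v
      refine ⟨(i : ZMod c.M), ?_⟩
      show c.g ((i : ZMod c.M)).val = v
      rw [ZMod.val_natCast, ← c.gmod]
      exact hi
  set eq := Equiv.ofBijective _ hbij with heq
  refine ⟨eq.symm, fun u v => ?_⟩
  have hu : c.g ((eq.symm u).val) = u := eq.apply_symm_apply u
  have hv : c.g ((eq.symm v).val) = v := eq.apply_symm_apply v
  have hiff := c.arc_iff ha helim ((eq.symm u).val) ((eq.symm v).val)
  rw [hu, hv] at hiff
  rw [hiff]
  show _ ↔ (eq.symm v - eq.symm u) ∈ ({1} : Set (ZMod c.M))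
  rw [Set.mem_singleton_iff, sub_eq_iff_eq_add']
  constructor
  · intro h
    have h1 : (((eq.symm v).val : ℕ) : ZMod c.M) = (((eq.symm u).val + 1 : ℕ) : ZMod c.M) :=
      (ZMod.natCast_eq_natCast_iff _ _ _).mpr h
    push_cast at h1
    rwa [ZMod.natCast_rightInverse, ZMod.natCast_rightInverse] at h1
  · intro h
    apply (ZMod.natCast_eq_natCast_iff _ _ _).mp
    push_cast
    rw [ZMod.natCast_rightInverse, ZMod.natCast_rightInverse]
    exact h

end S18

namespace S18

lemma circ_no_kernel (m : ℕ) (hodd : Odd m) :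
    ¬ HasKernel (Circ m ({1} : Set (ZMod m))) := by
  haveI : NeZero m := ⟨by rcases hodd with ⟨k, hk⟩; omega⟩
  refine no_kernel_of_cyclic _ m hodd (fun i => (i : ZMod m)) ?_ ?_ ?_
  · show ((m : ℕ) : ZMod m) = ((0 : ℕ) : ZMod m)
    simp
  · intro i
    show ((i + 1 : ℕ) : ZMod m) - (i : ZMod m) ∈ ({1} : Set (ZMod m))
    rw [Set.mem_singleton_iff]
    push_cast
    ring
  · intro i v hB
    have h1 : v - (i : ZMod m) = 1 := hB
    show v = ((i + 1 : ℕ) : ZMod m)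
    push_cast
    rw [← h1]
    ring

def gkAux (m : ℕ) (z : ZMod m) (S : Set (ZMod m)) : ℕ → Prop
  | 0 => False
  | (t + 1) => ((z - ((t + 1 : ℕ) : ZMod m)) ∈ S) ∧
      (((z - ((t : ℕ) : ZMod m)) ∉ S) ∨ ¬ gkAux m z S t)

lemma circ_induced_kernel (m : ℕ) (hm : 0 < m) (S : Set (ZMod m)) (hS : S ≠ Set.univ) :
    HasKernel (Induced (Circ m ({1} : Set (ZMod m))) S) := by
  haveI : NeZero m := ⟨hm.ne'⟩
  obtain ⟨z, hz⟩ := (Set.ne_univ_iff_exists_notMem S).mp hS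
  have hsubne : ∀ u : ZMod m, u ∈ S → z - u ≠ 0 := by
    intro u hu h0
    have : z = u := by
      have := sub_eq_zero.mp h0
      exact this
    exact hz (this ▸ hu)
  have hval1 : ∀ x : ZMod m, x ≠ 0 → 1 ≤ x.val := by
    intro x hx
    rcases Nat.eq_zero_or_pos x.val with h0 | h0
    · exact absurd ((ZMod.val_eq_zero x).mp h0) hx
    · exact h0
  have hcastval : ∀ x : ZMod m, ((x.val : ℕ) : ZMod m) = x := fun x => ZMod.natCast_rightInverse x
  have hvalsub : ∀ x : ZMod m, x ≠ 0 → (x - 1).val = x.val - 1 := by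
    intro x hx
    have h1 : 1 ≤ x.val := hval1 x hx
    have h2 : x - 1 = ((x.val - 1 : ℕ) : ZMod m) := by
      rw [Nat.cast_sub h1, Nat.cast_one, hcastval]
    rw [h2, ZMod.val_cast_of_lt (by have := ZMod.val_lt x; omega)]
  -- key: for u ∈ S with t := (z - u).val, we have t ≥ 1,
  --   ((t:ℕ):ZMod m) = z - u, z - (t:ℕ) = u, z - ((t-1:ℕ)) = u + 1
  refine ⟨{x : S | gkAux m z S ((z - (x : ZMod m)).val)}, ?_, ?_⟩
  · rintro ⟨u, hu⟩ hgu ⟨w, hwS⟩ hgw hB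
    have harc : w = u + 1 := by
      have h1 : w - u = 1 := hB
      rw [← h1]; ring
    subst harc
    have hne : z - u ≠ 0 := hsubne u hu
    have ht1 : 1 ≤ (z - u).val := hval1 _ hne
    obtain ⟨t', ht'⟩ : ∃ t', (z - u).val = t' + 1 := ⟨(z - u).val - 1, by omega⟩
    simp only [Set.mem_setOf_eq] at hgu hgw
    have hgu' : gkAux m z S (t' + 1) := by rwa [ht'] at hgu
    rw [gkAux] at hgu'
    have htw : (z - (u + 1)).val = t' := by
      have e1 : z - (u + 1) = (z - u) - 1 := by ring
      rw [e1, hvalsub _ hne, ht']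
      omega
    rcases hgu'.2 with hns | hng
    · -- z - (t' : ℕ) = u + 1
      have e2 : ((t' : ℕ) : ZMod m) = (z - u) - 1 := by
        have e3 : (((t' + 1 : ℕ)) : ZMod m) = z - u := by rw [← ht', hcastval]
        push_cast at e3
        rw [← e3]; ring
      have e4 : z - ((t' : ℕ) : ZMod m) = u + 1 := by rw [e2]; ring
      rw [e4] at hns
      exact hns hwS
    · apply hng
      rwa [htw] at hgw
  · rintro ⟨u, hu⟩ hgu
    simp only [Set.mem_setOf_eq] at hgu
    have hne : z - u ≠ 0 := hsubne u hu
    have ht1 : 1 ≤ (z - u).val := hval1 _ hne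
    obtain ⟨t', ht'⟩ : ∃ t', (z - u).val = t' + 1 := ⟨(z - u).val - 1, by omega⟩
    rw [ht', gkAux] at hgu
    have e2 : ((t' : ℕ) : ZMod m) = (z - u) - 1 := by
      have e3 : (((t' + 1 : ℕ)) : ZMod m) = z - u := by rw [← ht', hcastval]
      push_cast at e3
      rw [← e3]; ring
    have e4 : z - ((t' : ℕ) : ZMod m) = u + 1 := by rw [e2]; ring
    have e5 : z - (((t' + 1 : ℕ)) : ZMod m) = u := by
      have e3 : (((t' + 1 : ℕ)) : ZMod m) = z - u := by rw [← ht', hcastval]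
      rw [e3]; ring
    push_neg at hgu
    have hgu2 := hgu (by rw [e5]; exact hu)
    rw [e4] at hgu2
    obtain ⟨hw1', hw2⟩ := hgu2
    have htw : (z - (u + 1)).val = t' := by
      have e1 : z - (u + 1) = (z - u) - 1 := by ring
      rw [e1, hvalsub _ hne, ht']
      omega
    refine ⟨⟨u + 1, hw1'⟩, ?_, ?_⟩
    · show gkAux m z S ((z - (u + 1)).val)
      rw [htw]
      exact hw2
    · show (u + 1) - u ∈ ({1} : Set (ZMod m))
      rw [Set.mem_singleton_iff]
      ring
  
lemma IsCKI_circ (m : ℕ) (hodd : Odd m) (h3 : 3 ≤ m) :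
    IsCKI (Circ m ({1} : Set (ZMod m))) :=
  ⟨circ_no_kernel m hodd, fun S hS => circ_induced_kernel m (by omega) S hS⟩

lemma DigraphIso_symm {V W : Type} {A : V → V → Prop} {B : W → W → Prop}
    (h : DigraphIso A B) : DigraphIso B A := by
  obtain ⟨e, he⟩ := h
  refine ⟨e.symm, fun u v => ?_⟩
  have h1 := he (e.symm u) (e.symm v)
  rw [e.apply_symm_apply, e.apply_symm_apply] at h1
  exact h1.symm

lemma hasKernel_of_iso {V W : Type} {A : V → V → Prop} {B : W → W → Prop}
    (h : DigraphIso A B) (hk : HasKernel B) : HasKernel A := by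
  obtain ⟨e, he⟩ := h
  obtain ⟨S, hind, habs⟩ := hk
  refine ⟨e ⁻¹' S, ?_, ?_⟩
  · intro u hu v hv hA
    exact hind _ hu _ hv ((he u v).mp hA)
  · intro u hu
    obtain ⟨w, hw, hB⟩ := habs (e u) hu
    refine ⟨e.symm w, ?_, ?_⟩
    · show e (e.symm w) ∈ S
      rwa [e.apply_symm_apply]
    · apply (he u (e.symm w)).mpr
      rwa [e.apply_symm_apply]

lemma induced_iso {V W : Type} {A : V → V → Prop} {B : W → W → Prop} (e : V ≃ W)
    (he : ∀ u v, A u v ↔ B (e u) (e v)) (S : Set V) :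
    DigraphIso (Induced A S) (Induced B (e '' S)) := by
  refine ⟨⟨fun x => ⟨e x, ⟨x, x.2, rfl⟩⟩, fun y => ⟨e.symm y, ?_⟩, ?_, ?_⟩, ?_⟩
  · obtain ⟨x, hx, hxe⟩ := y.2
    show e.symm (y : W) ∈ S
    rw [← hxe, e.symm_apply_apply]
    exact hx
  · intro x
    apply Subtype.ext
    simp
  · intro y
    apply Subtype.ext
    simp
  · intro u v
    exact he (u : V) (v : V)

lemma isCKI_of_iso {V W : Type} {A : V → V → Prop} {B : W → W → Prop}
    (h : DigraphIso A B) (hB : IsCKI B) : IsCKI A := by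
  obtain ⟨e, he⟩ := h
  constructor
  · intro hk
    exact hB.1 (hasKernel_of_iso (DigraphIso_symm ⟨e, he⟩) hk)
  · intro S hS
    have hS' : e '' S ≠ Set.univ := by
      intro hu
      apply hS
      rw [Set.eq_univ_iff_forall]
      intro x
      obtain ⟨y, hy, hye⟩ := Set.eq_univ_iff_forall.mp hu (e x)
      rwa [← e.injective hye]
    exact hasKernel_of_iso (induced_iso e he S) (hB.2 _ hS')

end S18

/-- directed odd cycles are exactly the asymmetric CKI-digraphs among
arc-locally in/out-semicomplete and 3-anti-quasi-transitive TT₃-free digraphs. -/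
theorem stmt18 {V : Type} [Fintype V] (A : V → V → Prop)
    (ha : Asymmetric' A)
    (hfam : ArcLocallyInSemicomplete A ∨ ArcLocallyOutSemicomplete A ∨
      (ThreeAntiQuasiTransitive A ∧ TT3Free A)) :
    IsCKI A ↔ ∃ m : ℕ, Odd m ∧ 3 ≤ m ∧ DigraphIso A (Circ m ({1} : Set (ZMod m))) := by
  constructor
  · intro hc
    obtain ⟨c⟩ := S18.exists_minCyc hc ha
    have helim : ∀ s, Even s → 2 ≤ s → s ≤ c.M - 2 → ∀ a, ¬ A (c.g a) (c.g (a + s)) := by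
      rcases hfam with h | h | ⟨h3, hT⟩
      · exact S18.elimF1 c ha h
      · exact S18.elimF2 c ha h
      · exact S18.elimF3 c ha h3 hT
    exact ⟨c.M, c.hodd, c.hM3, c.iso ha helim (c.surj hc ha helim)⟩
  · rintro ⟨m, hodd, h3, iso⟩
    exact S18.isCKI_of_iso iso (S18.IsCKI_circ m hodd h3)
end

section
/- An asymmetric 3-quasi-transitive digraph is kernel perfect if and only if it has no induced C⃗₃; an asymmetric arc-locally in-semicomplete digraph, asymmetric arc-locally out-semicomplete digraph, or asymmetric 3-anti-quasi-transitive TT₃-free digraph is kernel perfect if and only if it has no induced directed odd cycle. -/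
namespace Stmt19Aux

variable {V : Type}

def WalkLen (A : V → V → Prop) : ℕ → V → V → Prop
  | 0, u, v => u = v
  | (n+1), u, v => ∃ x, A u x ∧ WalkLen A n x v

theorem walklen_trans {A : V → V → Prop} : ∀ {a : ℕ} {b : ℕ} {u v x : V},
    WalkLen A a u v → WalkLen A b v x → WalkLen A (a + b) u x := by
  intro a
  induction a with
  | zero =>
    intro b u v x h1 h2
    cases h1
    simpa using h2
  | succ n ih =>
    intro b u v x h1 h2
    obtain ⟨y, hy, hw⟩ := h1
    have : n + 1 + b = (n + b) + 1 := by omega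
    rw [this]
    exact ⟨y, hy, ih hw h2⟩

theorem walklen_map {W : Type} {A : V → V → Prop} {B : W → W → Prop} {f : W → V}
    (hf : ∀ a b, B a b → A (f a) (f b)) :
    ∀ {k : ℕ} {u v : W}, WalkLen B k u v → WalkLen A k (f u) (f v) := by
  intro k
  induction k with
  | zero => intro u v h; cases h; rfl
  | succ n ih =>
    intro u v h
    obtain ⟨x, hx, hw⟩ := h
    exact ⟨f x, hf _ _ hx, ih hw⟩

def Reach (A : V → V → Prop) (u v : V) : Prop := ∃ k, WalkLen A k u v

theorem reach_refl {A : V → V → Prop} (u : V) : Reach A u u := ⟨0, rfl⟩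

theorem reach_trans {A : V → V → Prop} {u v x : V} (h1 : Reach A u v) (h2 : Reach A v x) :
    Reach A u x := by
  obtain ⟨a, ha⟩ := h1; obtain ⟨b, hb⟩ := h2; exact ⟨a + b, walklen_trans ha hb⟩

theorem reach_arc {A : V → V → Prop} {u v : V} (h : A u v) : Reach A u v :=
  ⟨1, v, h, rfl⟩

theorem richardson : ∀ (n : ℕ) (V : Type) [Fintype V] (A : V → V → Prop),
    Fintype.card V ≤ n → (∀ k u, Odd k → ¬ WalkLen A k u u) → HasKernel A := by
  intro n
  induction n with
  | zero =>
    intro V _ A hcard _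
    have hVemp : IsEmpty V := Fintype.card_eq_zero_iff.mp (Nat.le_zero.mp hcard)
    exact ⟨∅, fun u hu => absurd hu (Set.notMem_empty u), fun u _ => (hVemp.elim u)⟩
  | succ n ih =>
    intro V _ A hcard hodd
    classical
    by_cases hne : Nonempty V
    case neg =>
      have hVemp : IsEmpty V := not_nonempty_iff.mp hne
      exact ⟨∅, fun u hu => absurd hu (Set.notMem_empty u), fun u _ => (hVemp.elim u)⟩
    obtain ⟨u0, -, hmin⟩ := Finset.exists_min_image Finset.univ
        (fun u => (Finset.univ.filter (fun v => Reach A u v)).card)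
        ⟨hne.some, Finset.mem_univ _⟩
    have hterm : ∀ v, Reach A u0 v → Reach A v u0 := by
      intro v hv
      by_contra hno
      have hsub : Finset.univ.filter (fun x => Reach A v x) ⊂
          Finset.univ.filter (fun x => Reach A u0 x) := by
        rw [Finset.ssubset_def]
        constructor
        · intro x hx
          simp only [Finset.mem_filter, Finset.mem_univ, true_and] at hx ⊢
          exact reach_trans hv hx
        · intro hsup
          have hu0 : u0 ∈ Finset.univ.filter (fun x => Reach A u0 x) := by
            simp only [Finset.mem_filter, Finset.mem_univ, true_and]
            exact reach_refl u0
          have := hsup hu0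
          simp only [Finset.mem_filter, Finset.mem_univ, true_and] at this
          exact hno this
      have hlt := Finset.card_lt_card hsub
      have hge := hmin v (Finset.mem_univ v)
      omega
    -- parity is well-defined on walks from u0 to vertices reaching back
    have hpar : ∀ v, Reach A u0 v → ∀ k1 k2, WalkLen A k1 u0 v → WalkLen A k2 u0 v →
        (k1 % 2 = k2 % 2) := by
      intro v hv k1 k2 h1 h2
      obtain ⟨t, ht⟩ := hterm v hv
      by_contra hne2
      have w1 := walklen_trans h1 ht
      have w2 := walklen_trans h2 ht
      have : Odd (k1 + t) ∨ Odd (k2 + t) := by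
        rw [Nat.odd_iff, Nat.odd_iff]; omega
      rcases this with h | h
      · exact hodd _ u0 h w1
      · exact hodd _ u0 h w2
    set K0 : Set V := {v | Reach A u0 v ∧ ∃ k, k % 2 = 0 ∧ WalkLen A k u0 v} with hK0def
    have hK0u0 : u0 ∈ K0 := ⟨reach_refl u0, 0, rfl, rfl⟩
    have hK0ind : ∀ u ∈ K0, ∀ v ∈ K0, ¬ A u v := by
      rintro u ⟨hru, k1, hk1, hw1⟩ v ⟨hrv, k2, hk2, hw2⟩ hA
      have hw3 : WalkLen A (k1 + 1) u0 v := walklen_trans hw1 ⟨v, hA, rfl⟩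
      have := hpar v hrv (k1 + 1) k2 hw3 hw2
      omega
    have habs : ∀ v, Reach A u0 v → v ∉ K0 → ∃ x, x ∈ K0 ∧ A v x := by
      intro v hrv hvn
      obtain ⟨k, hk⟩ := hrv
      have hkodd : k % 2 = 1 := by
        rcases Nat.even_or_odd k with he | ho
        · exact absurd ⟨⟨k, hk⟩, k, Nat.even_iff.mp he, hk⟩ hvn
        · exact Nat.odd_iff.mp ho
      obtain ⟨t, ht⟩ := hterm v ⟨k, hk⟩
      have hvne : v ≠ u0 := by rintro rfl; exact hvn hK0u0
      match t, ht with
      | 0, ht => exact absurd ht hvne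
      | (t+1), ht =>
        obtain ⟨x, hx, -⟩ := ht
        refine ⟨x, ⟨reach_trans ⟨k, hk⟩ (reach_arc hx), k + 1, by omega,
          walklen_trans hk ⟨x, hx, rfl⟩⟩, hx⟩
    set T : Set V := {v | ∃ x, x ∈ K0 ∧ A v x} with hTdef
    set P : V → Prop := fun v => v ∉ K0 ∧ v ∉ T with hPdef
    have hcard' : Fintype.card {v // P v} ≤ n := by
      have h1 : Fintype.card {v // P v} < Fintype.card V :=
        Fintype.card_subtype_lt (x := u0) (fun h => h.1 hK0u0)
      omega
    obtain ⟨K1, hK1ind, hK1abs⟩ := ih {v // P v} (fun a b => A a.1 b.1) hcard'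
      (by
        intro k u hk hw
        exact hodd k u.1 hk (walklen_map (f := Subtype.val) (B := fun a b => A a.1 b.1) (fun a b h => h) hw))
    refine ⟨K0 ∪ (fun v : {v // P v} => v.1) '' K1, ?_, ?_⟩
    · rintro u hu v hv hA
      rcases hu with hu | ⟨u', hu', rfl⟩
      · rcases hv with hv | ⟨v', hv', rfl⟩
        · exact hK0ind u hu v hv hA
        · have hrv : Reach A u0 v'.1 := reach_trans hu.1 (reach_arc hA)
          by_cases hvK : v'.1 ∈ K0
          · exact v'.2.1 hvK
          · obtain ⟨x, hxK, hxA⟩ := habs _ hrv hvK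
            exact v'.2.2 ⟨x, hxK, hxA⟩
      · rcases hv with hv | ⟨v', hv', rfl⟩
        · exact u'.2.2 ⟨v, hv, hA⟩
        · exact hK1ind u' hu' v' hv' hA
    · intro u hu
      by_cases huT : u ∈ T
      · obtain ⟨x, hxK, hxA⟩ := huT
        exact ⟨x, Or.inl hxK, hxA⟩
      · have huK : u ∉ K0 := fun h => hu (Or.inl h)
        by_cases h1 : (⟨u, huK, huT⟩ : {v // P v}) ∈ K1
        · exact absurd (Or.inr ⟨⟨u, huK, huT⟩, h1, rfl⟩) hu
        · obtain ⟨v', hv', hA⟩ := hK1abs ⟨u, huK, huT⟩ h1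
          exact ⟨v'.1, Or.inr ⟨v', hv', rfl⟩, hA⟩

end Stmt19Aux
namespace Stmt19Aux

theorem haskernel_of_iso {V W : Type} {A : V → V → Prop} {B : W → W → Prop}
    (h : DigraphIso A B) (hA : HasKernel A) : HasKernel B := by
  obtain ⟨e, he⟩ := h
  obtain ⟨S, hind, habs⟩ := hA
  refine ⟨e '' S, ?_, ?_⟩
  · rintro u ⟨a, ha, rfl⟩ v ⟨b, hb, rfl⟩ hB
    exact hind a ha b hb ((he a b).mpr hB)
  · intro u hu
    have hns : e.symm u ∉ S := by
      intro h
      exact hu ⟨e.symm u, h, e.apply_symm_apply u⟩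
    obtain ⟨v, hv, hAv⟩ := habs _ hns
    refine ⟨e v, ⟨v, hv, rfl⟩, ?_⟩
    have := (he (e.symm u) v).mp hAv
    rwa [e.apply_symm_apply] at this

theorem circ_no_kernel (m : ℕ) (hm : Odd m) (h3 : 3 ≤ m) :
    ¬ HasKernel (Circ m ({1} : Set (ZMod m))) := by
  rintro ⟨S, hind, habs⟩
  haveI : NeZero m := ⟨by omega⟩
  have key : ∀ x : ZMod m, x ∈ S ↔ x + 1 ∉ S := by
    intro x
    constructor
    · intro hx hx1
      exact hind x hx (x + 1) hx1 (by simp [Circ])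
    · intro hx1
      by_contra hx
      obtain ⟨v, hv, hA⟩ := habs x hx
      have hveq : v = x + 1 := by
        have h1 : v - x = 1 := hA
        have := sub_eq_iff_eq_add.mp h1
        rw [this]; ring
      exact hx1 (hveq ▸ hv)
  have main : ∀ k : ℕ, ((k : ZMod m) ∈ S ↔ (Even k ↔ (0 : ZMod m) ∈ S)) := by
    intro k
    induction k with
    | zero => simp
    | succ k ihk =>
      have hcast : ((k + 1 : ℕ) : ZMod m) = (k : ZMod m) + 1 := by push_cast; ring
      have h2 := key (k : ZMod m)
      rw [hcast, Nat.even_add_one]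
      tauto
  have h0 := main m
  rw [ZMod.natCast_self] at h0
  have hnotEven : ¬ Even m := by
    rw [Nat.even_iff]
    rw [Nat.odd_iff] at hm
    omega
  tauto

variable {V : Type} {m : ℕ} [NeZero m] {A : V → V → Prop} {w : ZMod m → V}

theorem walk_steps {c : ZMod m} (h : ∀ p, A (w p) (w (p + c))) :
    ∀ (t : ℕ) (i : ZMod m), WalkLen A t (w i) (w (i + (t : ZMod m) * c)) := by
  intro t
  induction t with
  | zero =>
    intro i
    show w i = w (i + ((0 : ℕ) : ZMod m) * c)
    norm_num
  | succ t iht =>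
    intro i
    refine ⟨w (i + c), h i, ?_⟩
    have heq : i + ((t + 1 : ℕ) : ZMod m) * c = i + c + (t : ZMod m) * c := by
      push_cast; ring
    rw [heq]
    exact iht (i + c)

end Stmt19Aux
namespace Stmt19Aux

theorem walklen_fun {V : Type} {A : V → V → Prop} :
    ∀ {n : ℕ} {u v : V}, WalkLen A n u v →
      ∃ f : ℕ → V, f 0 = u ∧ f n = v ∧ ∀ i, i < n → A (f i) (f (i + 1)) := by
  intro n
  induction n with
  | zero =>
    intro u v h
    cases h
    exact ⟨fun _ => u, rfl, rfl, by omega⟩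
  | succ n ih =>
    intro u v h
    obtain ⟨x, hx, hw⟩ := h
    obtain ⟨g, hg0, hgn, hga⟩ := ih hw
    refine ⟨fun i => if i = 0 then u else g (i - 1), by simp, by simp [hgn], ?_⟩
    intro i hi
    rcases Nat.eq_zero_or_pos i with rfl | hpos
    · simpa [hg0] using hx
    · have h1 : i ≠ 0 := by omega
      have h2 : i + 1 ≠ 0 := by omega
      simp only [h1, h2, if_false]
      have := hga (i - 1) (by omega)
      rwa [show i - 1 + 1 = i + 1 - 1 by omega] at this

theorem no_odd_closed {V : Type} (A : V → V → Prop) (hasym : Asymmetric' A)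
    (hcase :
      (ThreeQuasiTransitive A ∧
        (∀ S : Set V, ¬ DigraphIso (Induced A S) (Circ 3 ({1} : Set (ZMod 3))))) ∨
      ((ArcLocallyInSemicomplete A ∨ ArcLocallyOutSemicomplete A ∨
          (ThreeAntiQuasiTransitive A ∧ TT3Free A)) ∧
        (∀ m : ℕ, Odd m → 3 ≤ m →
          ∀ S : Set V, ¬ DigraphIso (Induced A S) (Circ m ({1} : Set (ZMod m)))))) :
    ∀ (k : ℕ) (u : V), Odd k → ¬ WalkLen A k u u := by
  intro k0 v0 hk0 hw0
  classical
  have hex : ∃ k, Odd k ∧ ∃ u, WalkLen A k u u := ⟨k0, hk0, v0, hw0⟩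
  obtain ⟨m, ⟨hmodd, u0, hwm⟩, hminraw⟩ :
      ∃ m, (Odd m ∧ ∃ u, WalkLen A m u u) ∧
        ∀ L, L < m → ¬(Odd L ∧ ∃ x, WalkLen A L x x) :=
    ⟨Nat.find hex, Nat.find_spec hex, fun L hL => Nat.find_min hex hL⟩
  have hm1 : m % 2 = 1 := Nat.odd_iff.mp hmodd
  have hmne1 : m ≠ 1 := by
    rintro rfl
    obtain ⟨x, hx, hxe⟩ := hwm
    cases hxe
    exact hasym _ _ hx hx
  have hm3 : 3 ≤ m := by omega
  haveI : NeZero m := ⟨by omega⟩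
  haveI : Fact (1 < m) := ⟨by omega⟩
  have hmin : ∀ (L : ℕ) (x : V), L % 2 = 1 → L < m → WalkLen A L x x → False :=
    fun L x h1 h2 hw => hminraw L h2 ⟨Nat.odd_iff.mpr h1, x, hw⟩
  obtain ⟨f, hf0, hfm, hfa⟩ := walklen_fun hwm
  set w : ZMod m → V := fun z => f z.val with hwdef
  have cyc : ∀ i : ZMod m, A (w i) (w (i + 1)) := by
    intro i
    have hval : (i + 1).val = (i.val + 1) % m := by
      rw [ZMod.val_add, ZMod.val_one]
    have hivlt : i.val < m := ZMod.val_lt i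
    by_cases hc : i.val + 1 < m
    · have h1 : (i + 1).val = i.val + 1 := by rw [hval, Nat.mod_eq_of_lt hc]
      show A (f i.val) (f (i + 1).val)
      rw [h1]
      exact hfa i.val (by omega)
    · have hiv : i.val + 1 = m := by omega
      have h2 : (i + 1).val = 0 := by rw [hval, hiv, Nat.mod_self]
      show A (f i.val) (f (i + 1).val)
      rw [h2, hf0, ← hfm]
      have := hfa i.val (by omega)
      rwa [hiv] at this
  have inj : Function.Injective w := by
    intro i j hij
    by_contra hne
    have hsub : j - i ≠ 0 := sub_ne_zero.mpr (Ne.symm hne)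
    have ht1 : 0 < (j - i).val := ZMod.val_pos.mpr hsub
    have ht2 : (j - i).val < m := ZMod.val_lt _
    have hw1 : WalkLen A ((j - i).val) (w i) (w i) := by
      have := walk_steps cyc ((j - i).val) i
      rwa [mul_one, ZMod.natCast_zmod_val, show i + (j - i) = j by ring, ← hij] at this
    have hw2 : WalkLen A (m - (j - i).val) (w j) (w j) := by
      have := walk_steps cyc (m - (j - i).val) j
      have hcast : ((m - (j - i).val : ℕ) : ZMod m) = -(j - i) := by
        rw [Nat.cast_sub ht2.le, ZMod.natCast_self, ZMod.natCast_zmod_val]; ring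
      rwa [mul_one, hcast, show j + -(j - i) = i by ring, hij] at this
    rcases Nat.even_or_odd ((j - i).val) with he | ho
    · rw [Nat.even_iff] at he
      exact hmin (m - (j - i).val) (w j) (by omega) (by omega) hw2
    · rw [Nat.odd_iff] at ho
      exact hmin ((j - i).val) (w i) ho (by omega) hw1
  have wne : ∀ (x : ZMod m) (c : ℕ), 0 < c → c < m → w x ≠ w (x + (c : ZMod m)) := by
    intro x c h1 h2 heq
    have heq2 : x = x + (c : ZMod m) := inj heq
    have hc0 : ((c : ℕ) : ZMod m) = 0 := by linear_combination -heq2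
    rw [ZMod.natCast_eq_zero_iff] at hc0
    have := Nat.le_of_dvd h1 hc0
    omega
  have badarc : ∀ (s t : ZMod m) (cv : ℕ), cv % 2 = 0 → 0 < cv → cv + 1 < m →
      s - t = (cv : ZMod m) → A (w s) (w t) → False := by
    intro s t cv hev hpos hlt hst hA
    have hwalk : WalkLen A cv (w t) (w s) := by
      have := walk_steps cyc cv t
      rwa [mul_one, ← hst, show t + (s - t) = s by ring] at this
    exact hmin (1 + cv) (w s) (by omega) (by omega)
      (walklen_trans (⟨w t, hA, rfl⟩ : WalkLen A 1 (w s) (w t)) hwalk)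
  have chordlem : (∃ a b : ZMod m, a ≠ b ∧ b ≠ a + 1 ∧ A (w a) (w b)) →
      ∃ dv : ℕ, dv % 2 = 0 ∧ 2 ≤ dv ∧ dv ≤ m - 3 ∧
        ∃ a, A (w a) (w (a + (dv : ZMod m))) := by
    rintro ⟨a, b, hab, hab1, hA⟩
    have hbne : b - a ≠ 0 := sub_ne_zero.mpr (Ne.symm hab)
    have hbav : b = a + (((b - a).val : ℕ) : ZMod m) := by
      rw [ZMod.natCast_zmod_val]; ring
    have hdvlt : (b - a).val < m := ZMod.val_lt _
    have hdv0 : (b - a).val ≠ 0 := by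
      rw [ZMod.val_ne_zero]; exact hbne
    have hdv1 : (b - a).val ≠ 1 := by
      intro h
      apply hab1
      rw [hbav, h]
      norm_num
    have hdvm1 : (b - a).val ≠ m - 1 := by
      intro h
      have hcast : (((b - a).val : ℕ) : ZMod m) = -1 := by
        rw [h, Nat.cast_sub (by omega : 1 ≤ m), ZMod.natCast_self]
        norm_num
      have hb2 : b = a - 1 := by rw [hbav, hcast]; ring
      have := cyc b
      rw [hb2, show a - 1 + 1 = a by ring, ← hb2] at this
      exact hasym _ _ hA this
    by_cases hpar : (b - a).val % 2 = 1
    · exfalso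
      apply badarc a b (m - (b - a).val) (by omega) (by omega) (by omega) ?_ hA
      rw [Nat.cast_sub hdvlt.le, ZMod.natCast_self, ZMod.natCast_zmod_val]
      ring
    · exact ⟨(b - a).val, by omega, by omega, by omega, a, by rw [← hbav]; exact hA⟩
  have finwalk : ∀ (s j r : ℕ), (∀ a : ZMod m, A (w a) (w (a + (s : ZMod m)))) →
      (m ∣ j * s + r) → (j + r) % 2 = 1 → 0 < j + r → j + r < m → False := by
    intro s j r hs hdvd hparr hpos hlt
    have h1 : WalkLen A j (w 0) (w (0 + (j : ZMod m) * (s : ZMod m))) := walk_steps hs j 0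
    have h2 := walk_steps cyc r (0 + (j : ZMod m) * (s : ZMod m))
    rw [mul_one] at h2
    have h3 := walklen_trans h1 h2
    have hzero : (0 : ZMod m) + (j : ZMod m) * (s : ZMod m) + (r : ZMod m) = 0 := by
      have hc : ((j * s + r : ℕ) : ZMod m) = 0 :=
        (ZMod.natCast_eq_zero_iff _ _).mpr hdvd
      push_cast at hc
      linear_combination hc
    rw [hzero] at h3
    exact hmin (j + r) (w 0) hparr hlt h3
  have nochord_iso : (¬ ∃ a b : ZMod m, a ≠ b ∧ b ≠ a + 1 ∧ A (w a) (w b)) →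
      DigraphIso (Induced A (Set.range w)) (Circ m ({1} : Set (ZMod m))) := by
    intro hnc
    refine ⟨(Equiv.ofInjective w inj).symm, ?_⟩
    have hwe : ∀ u : ↥(Set.range w), w ((Equiv.ofInjective w inj).symm u) = u.1 :=
      fun u => Equiv.apply_ofInjective_symm inj u
    intro u v
    constructor
    · intro hA
      have hAw : A (w ((Equiv.ofInjective w inj).symm u))
          (w ((Equiv.ofInjective w inj).symm v)) := by
        rw [hwe u, hwe v]; exact hA
      show _ - _ ∈ ({1} : Set (ZMod m))
      rw [Set.mem_singleton_iff]
      set i := (Equiv.ofInjective w inj).symm u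
      set j := (Equiv.ofInjective w inj).symm v
      by_cases hij : i = j
      · exfalso; rw [hij] at hAw; exact hasym _ _ hAw hAw
      · by_cases hj1 : j = i + 1
        · rw [hj1]; ring
        · exact absurd ⟨i, j, hij, hj1, hAw⟩ hnc
    · intro hC
      have hC1 : (Equiv.ofInjective w inj).symm v - (Equiv.ofInjective w inj).symm u = 1 :=
        Set.mem_singleton_iff.mp hC
      show A u.1 v.1
      rw [← hwe u, ← hwe v]
      have hj : (Equiv.ofInjective w inj).symm v = (Equiv.ofInjective w inj).symm u + 1 := by
        linear_combination hC1
      rw [hj]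
      exact cyc _
  rcases hcase with ⟨h3qt, hno3⟩ | ⟨hclass, hnoall⟩
  · -- 3-quasi-transitive case
    rcases (by omega : m = 3 ∨ 5 ≤ m) with heq3 | hm5
    · subst heq3
      have hnc : ¬ ∃ a b : ZMod 3, a ≠ b ∧ b ≠ a + 1 ∧ A (w a) (w b) := by
        intro hc
        obtain ⟨dv, hp, h2, h3', -⟩ := chordlem hc
        omega
      exact hno3 _ (nochord_iso hnc)
    · -- m ≥ 5 : 3QT forces all the back-3 chords, then a short odd closed walk
      have hch3 : ∀ a : ZMod m, A (w a) (w (a + ((m - 3 : ℕ) : ZMod m))) := by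
        intro a
        have hc3 : ((m - 3 : ℕ) : ZMod m) = -((3 : ℕ) : ZMod m) := by
          rw [Nat.cast_sub (by omega : 3 ≤ m), ZMod.natCast_self]
          ring
        set p := a - ((3 : ℕ) : ZMod m) with hpdef
        have e1 : A (w p) (w (p + 1)) := cyc p
        have e2 : A (w (p + 1)) (w (p + 1 + 1)) := cyc (p + 1)
        have e3 : A (w (p + 1 + 1)) (w (p + 1 + 1 + 1)) := cyc (p + 1 + 1)
        have hp3 : p + 1 + 1 + 1 = p + ((3 : ℕ) : ZMod m) := by push_cast; ring
        rw [hp3] at e3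
        have hne : w p ≠ w (p + ((3 : ℕ) : ZMod m)) := wne p 3 (by omega) (by omega)
        rcases h3qt _ _ _ _ e1 e2 e3 hne with hfwd | hbwd
        · exact absurd hfwd (fun hf => badarc p (p + ((3 : ℕ) : ZMod m)) (m - 3)
            (by omega) (by omega) (by omega) (by rw [hc3]; ring) hf)
        · have hpa : p + ((3 : ℕ) : ZMod m) = a := by rw [hpdef]; ring
          have hpa2 : p = a + ((m - 3 : ℕ) : ZMod m) := by rw [hpdef, hc3]; ring
          rw [hpa, hpa2] at hbwd
          exact hbwd
      have hj1 : m ≤ 3 * ((m + 2) / 3) := by omega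
      have hj2 : 1 ≤ (m + 2) / 3 := by omega
      refine finwalk (m - 3) ((m + 2) / 3) (3 * ((m + 2) / 3) - m) hch3
        ⟨(m + 2) / 3 - 1, ?_⟩ (by omega) (by omega) (by omega)
      zify [hj1, hj2, (by omega : 3 ≤ m)]
      ring
  · -- the three structural classes
    by_cases hch : ∃ a b : ZMod m, a ≠ b ∧ b ≠ a + 1 ∧ A (w a) (w b)
    case neg => exact hnoall m hmodd hm3 _ (nochord_iso hch)
    obtain ⟨dv0, hp0, h20, h30, a0, ha0⟩ := chordlem hch
    have hm5 : 5 ≤ m := by omega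
    rcases hclass with halis | halos | ⟨haqt, htt3⟩
    · -- arc-locally in-semicomplete
      have prop : ∀ dv : ℕ, dv % 2 = 0 → 2 ≤ dv → dv ≤ m - 3 →
          (∃ a, A (w a) (w (a + (dv : ZMod m)))) →
          ∀ b, A (w b) (w (b + (dv : ZMod m))) := by
        rintro dv hev h2 h3' ⟨a, ha⟩ b
        have hstep : ∀ p, A (w p) (w (p + (dv : ZMod m))) →
            A (w (p - 1)) (w (p - 1 + (dv : ZMod m))) := by
          intro p hp
          have hc1 : A (w (p - 1)) (w p) := by
            have := cyc (p - 1); rwa [show p - 1 + 1 = p by ring] at this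
          have hc2 : A (w (p - 1 + (dv : ZMod m))) (w (p + (dv : ZMod m))) := by
            have := cyc (p - 1 + (dv : ZMod m))
            rwa [show p - 1 + (dv : ZMod m) + 1 = p + (dv : ZMod m) by ring] at this
          have hxy : w (p - 1) ≠ w (p - 1 + (dv : ZMod m)) :=
            wne (p - 1) dv (by omega) (by omega)
          rcases halis _ _ _ _ hp hc1 hc2 hxy with hgood | hbad
          · exact hgood
          · exact absurd hbad (fun hb => badarc _ _ dv hev (by omega) (by omega)
              (by ring) hb)
        have hiter : ∀ n : ℕ, A (w (a - (n : ZMod m))) (w (a - (n : ZMod m) + (dv : ZMod m))) := by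
          intro n
          induction n with
          | zero => simpa using ha
          | succ n ihn =>
            have := hstep _ ihn
            rwa [show a - ((n : ℕ) : ZMod m) - 1 = a - (((n + 1 : ℕ) : ℕ) : ZMod m) by
              push_cast; ring] at this
        have := hiter ((a - b).val)
        rwa [ZMod.natCast_zmod_val, show a - (a - b) = b by ring] at this
      have desc : ∀ dv : ℕ, dv % 2 = 0 → 2 ≤ dv → dv ≤ m - 3 →
          (∀ b, A (w b) (w (b + (dv : ZMod m)))) → False := by
        intro dv
        induction dv using Nat.strong_induction_on with
        | _ dv ihdv =>
        intro hev h2 h3' hall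
        rcases (by omega : dv = 2 ∨ 4 ≤ dv) with rfl | h4
        · exact finwalk 2 2 (m - 4) hall ⟨1, by omega⟩ (by omega) (by omega) (by omega)
        · have hall' : ∀ b, A (w b) (w (b + ((dv - 2 : ℕ) : ZMod m))) := by
            intro b
            have hcast2 : ((dv - 2 : ℕ) : ZMod m) = (dv : ZMod m) - 2 := by
              rw [Nat.cast_sub (by omega : 2 ≤ dv)]; norm_num
            set i := b + (dv : ZMod m) - 1 with hidef
            have hu : A (w i) (w (i + 1)) := cyc i
            have hx : A (w (i - 1)) (w i) := by
              have := cyc (i - 1); rwa [show i - 1 + 1 = i by ring] at this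
            have hy : A (w b) (w (i + 1)) := by
              have := hall b
              rwa [show b + (dv : ZMod m) = i + 1 by rw [hidef]; ring] at this
            have hi1 : i - 1 = b + ((dv - 2 : ℕ) : ZMod m) := by
              rw [hidef, hcast2]; ring
            have hxy : w (i - 1) ≠ w b := by
              rw [hi1]
              exact (wne b (dv - 2) (by omega) (by omega)).symm
            rcases halis _ _ _ _ hu hx hy hxy with hbad | hgood
            · exfalso
              refine badarc (i - 1) b (dv - 2) (by omega) (by omega) (by omega) ?_ hbad
              rw [hi1]; ring
            · rwa [hi1] at hgood
          exact ihdv (dv - 2) (by omega) (by omega) (by omega) (by omega) hall'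
      exact desc dv0 hp0 h20 h30 (prop dv0 hp0 h20 h30 ⟨a0, ha0⟩)
    · -- arc-locally out-semicomplete
      have prop : ∀ dv : ℕ, dv % 2 = 0 → 2 ≤ dv → dv ≤ m - 3 →
          (∃ a, A (w a) (w (a + (dv : ZMod m)))) →
          ∀ b, A (w b) (w (b + (dv : ZMod m))) := by
        rintro dv hev h2 h3' ⟨a, ha⟩ b
        have hstep : ∀ p, A (w p) (w (p + (dv : ZMod m))) →
            A (w (p + 1)) (w (p + 1 + (dv : ZMod m))) := by
          intro p hp
          have hc1 : A (w p) (w (p + 1)) := cyc p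
          have hc2 : A (w (p + (dv : ZMod m))) (w (p + 1 + (dv : ZMod m))) := by
            have := cyc (p + (dv : ZMod m))
            rwa [show p + (dv : ZMod m) + 1 = p + 1 + (dv : ZMod m) by ring] at this
          have hxy : w (p + 1) ≠ w (p + 1 + (dv : ZMod m)) :=
            wne (p + 1) dv (by omega) (by omega)
          rcases halos _ _ _ _ hp hc1 hc2 hxy with hgood | hbad
          · exact hgood
          · exact absurd hbad (fun hb => badarc _ _ dv hev (by omega) (by omega)
              (by ring) hb)
        have hiter : ∀ n : ℕ, A (w (a + (n : ZMod m))) (w (a + (n : ZMod m) + (dv : ZMod m))) := by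
          intro n
          induction n with
          | zero => simpa using ha
          | succ n ihn =>
            have := hstep _ ihn
            rwa [show a + ((n : ℕ) : ZMod m) + 1 = a + (((n + 1 : ℕ) : ℕ) : ZMod m) by
              push_cast; ring] at this
        have := hiter ((b - a).val)
        rwa [ZMod.natCast_zmod_val, show a + (b - a) = b by ring] at this
      have desc : ∀ dv : ℕ, dv % 2 = 0 → 2 ≤ dv → dv ≤ m - 3 →
          (∀ b, A (w b) (w (b + (dv : ZMod m)))) → False := by
        intro dv
        induction dv using Nat.strong_induction_on with
        | _ dv ihdv =>
        intro hev h2 h3' hall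
        rcases (by omega : dv = 2 ∨ 4 ≤ dv) with rfl | h4
        · exact finwalk 2 2 (m - 4) hall ⟨1, by omega⟩ (by omega) (by omega) (by omega)
        · have hall' : ∀ b, A (w b) (w (b + ((dv - 2 : ℕ) : ZMod m))) := by
            intro b
            have hcast2 : ((dv - 2 : ℕ) : ZMod m) = (dv : ZMod m) - 2 := by
              rw [Nat.cast_sub (by omega : 2 ≤ dv)]; norm_num
            set i := b - 2 with hidef
            have hu : A (w i) (w (i + 1)) := cyc i
            have hx : A (w i) (w (i + (dv : ZMod m))) := hall i
            have hy : A (w (i + 1)) (w (i + 1 + 1)) := cyc (i + 1)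
            have hi1 : i + (dv : ZMod m) = b + ((dv - 2 : ℕ) : ZMod m) := by
              rw [hidef, hcast2]; ring
            have hi2 : i + 1 + 1 = b := by rw [hidef]; ring
            rw [hi2] at hy
            have hxy : w (i + (dv : ZMod m)) ≠ w b := by
              rw [hi1]
              exact (wne b (dv - 2) (by omega) (by omega)).symm
            rcases halos _ _ _ _ hu hx hy hxy with hbad | hgood
            · exfalso
              refine badarc (i + (dv : ZMod m)) b (dv - 2) (by omega) (by omega)
                (by omega) ?_ hbad
              rw [hi1]; ring
            · rwa [hi1] at hgood
          exact ihdv (dv - 2) (by omega) (by omega) (by omega) (by omega) hall'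
      exact desc dv0 hp0 h20 h30 (prop dv0 hp0 h20 h30 ⟨a0, ha0⟩)
    · -- 3-anti-quasi-transitive and TT3-free
      have desc : ∀ dv : ℕ, dv % 2 = 0 → 2 ≤ dv → dv ≤ m - 3 →
          (∃ a, A (w a) (w (a + (dv : ZMod m)))) → False := by
        intro dv
        induction dv using Nat.strong_induction_on with
        | _ dv ihdv =>
        rintro hev h2 h3' ⟨a, ha⟩
        rcases (by omega : dv = 2 ∨ 4 ≤ dv) with rfl | h4
        · -- a transitive triangle
          have hc2 : ((2 : ℕ) : ZMod m) = (2 : ZMod m) := by norm_num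
          rw [hc2] at ha
          refine htt3 ⟨w a, w (a + 1), w (a + 2), ?_, ?_, ?_, cyc a, ?_, ?_⟩
          · have := wne a 1 (by omega) (by omega)
            rwa [show a + ((1 : ℕ) : ZMod m) = a + 1 by push_cast; ring] at this
          · have := wne (a + 1) 1 (by omega) (by omega)
            rwa [show a + 1 + ((1 : ℕ) : ZMod m) = a + 2 by push_cast; ring] at this
          · have := wne a 2 (by omega) (by omega)
            rwa [show a + ((2 : ℕ) : ZMod m) = a + 2 by push_cast; ring] at this
          · have := cyc (a + 1)
            rwa [show a + 1 + 1 = a + 2 by ring] at this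
          · exact ha
        · have hcast2 : ((dv - 2 : ℕ) : ZMod m) = (dv : ZMod m) - 2 := by
            rw [Nat.cast_sub (by omega : 2 ≤ dv)]; norm_num
          have hcast1 : ((dv - 1 : ℕ) : ZMod m) = (dv : ZMod m) - 1 := by
            rw [Nat.cast_sub (by omega : 1 ≤ dv)]; norm_num
          have hne1 : w (a + 1) ≠ w (a + (dv : ZMod m)) := by
            have := wne (a + 1) (dv - 1) (by omega) (by omega)
            rwa [show a + 1 + ((dv - 1 : ℕ) : ZMod m) = a + (dv : ZMod m) by
              rw [hcast1]; ring] at this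
          have hne2 : w a ≠ w (a + (dv : ZMod m) - 1) := by
            have := wne a (dv - 1) (by omega) (by omega)
            rwa [show a + ((dv - 1 : ℕ) : ZMod m) = a + (dv : ZMod m) - 1 by
              rw [hcast1]; ring] at this
          have hne3 : w (a + 1) ≠ w (a + (dv : ZMod m) - 1) := by
            have := wne (a + 1) (dv - 2) (by omega) (by omega)
            rwa [show a + 1 + ((dv - 2 : ℕ) : ZMod m) = a + (dv : ZMod m) - 1 by
              rw [hcast2]; ring] at this
          have hxw : A (w (a + (dv : ZMod m) - 1)) (w (a + (dv : ZMod m))) := by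
            have := cyc (a + (dv : ZMod m) - 1)
            rwa [show a + (dv : ZMod m) - 1 + 1 = a + (dv : ZMod m) by ring] at this
          rcases haqt (w (a + 1)) (w a) (w (a + (dv : ZMod m))) (w (a + (dv : ZMod m) - 1))
              hne1 hne2 hne3 (Or.inr ⟨cyc a, ha, hxw⟩) with hgood | hbad
          · refine ihdv (dv - 2) (by omega) (by omega) (by omega) (by omega) ⟨a + 1, ?_⟩
            rwa [show a + 1 + ((dv - 2 : ℕ) : ZMod m) = a + (dv : ZMod m) - 1 by
              rw [hcast2]; ring]
          · exact badarc (a + (dv : ZMod m) - 1) (a + 1) (dv - 2) (by omega) (by omega)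
              (by omega) (by rw [hcast2]; ring) hbad
      exact desc dv0 hp0 h20 h30 ⟨a0, ha0⟩


end Stmt19Aux
/-- KP characterizations for asymmetric generalized bipartite tournaments. -/
theorem stmt19 :
    (∀ (V : Type) [Fintype V] (A : V → V → Prop), Asymmetric' A → ThreeQuasiTransitive A →
      (IsKP A ↔ ∀ S : Set V, ¬ DigraphIso (Induced A S) (Circ 3 ({1} : Set (ZMod 3))))) ∧
    (∀ (V : Type) [Fintype V] (A : V → V → Prop), Asymmetric' A →
      (ArcLocallyInSemicomplete A ∨ ArcLocallyOutSemicomplete A ∨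
        (ThreeAntiQuasiTransitive A ∧ TT3Free A)) →
      (IsKP A ↔ ∀ S : Set V, ¬ ∃ m : ℕ, Odd m ∧ 3 ≤ m ∧
        DigraphIso (Induced A S) (Circ m ({1} : Set (ZMod m))))) := by
  constructor
  · intro V _ A hasym h3qt
    constructor
    · intro hkp S hiso
      exact Stmt19Aux.circ_no_kernel 3 (by decide) (le_refl 3)
        (Stmt19Aux.haskernel_of_iso hiso (hkp S))
    · intro hno S
      haveI : Fintype ↥S := Fintype.ofFinite _
      apply Stmt19Aux.richardson (Fintype.card ↥S) ↥S (Induced A S) le_rfl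
      intro k u hk hw
      exact Stmt19Aux.no_odd_closed A hasym (Or.inl ⟨h3qt, hno⟩) k u.1 hk
        (Stmt19Aux.walklen_map (f := Subtype.val) (B := Induced A S) (fun a b h => h) hw)
  · intro V _ A hasym hclass
    constructor
    · intro hkp S hiso
      obtain ⟨mm, hmm, h3m, hiso'⟩ := hiso
      exact Stmt19Aux.circ_no_kernel mm hmm h3m (Stmt19Aux.haskernel_of_iso hiso' (hkp S))
    · intro hno S
      haveI : Fintype ↥S := Fintype.ofFinite _
      apply Stmt19Aux.richardson (Fintype.card ↥S) ↥S (Induced A S) le_rfl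
      intro k u hk hw
      exact Stmt19Aux.no_odd_closed A hasym
        (Or.inr ⟨hclass, fun mm hmm h3m S' hiso => hno S' ⟨mm, hmm, h3m, hiso⟩⟩) k u.1 hk
        (Stmt19Aux.walklen_map (f := Subtype.val) (B := Induced A S) (fun a b h => h) hw)
end
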